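/- arXiv:2010.09972 — 3 statements merged into one kernel-verified Lean document; each statement's English description precedes it below -/
import Mathlib

section
/- Let s > 11/2. There is a constant C = C(s) > 0 such that for all u, v ∈ H^s(𝕋): |(v ∂_x v − u ∂_x u, u − v)_{H^{s-2}}| ≤ C (‖u‖_{H^s} + ‖v‖_{H^s}) ‖u − v‖²_{H^{s-2}}. -/
noncomputable section
open scoped BigOperators

/-- A (complex-valued) function on the torus `𝕋 = ℝ/2πℤ`, represented by its sequence of
Fourier coefficients `f̂ : ℤ → ℂ`. -/
abbrev FC := ℤ → ℂ

namespace FC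

/-- The Sobolev weight `(1+k²)^s`. -/
def wt (s : ℝ) (k : ℤ) : ℝ := (1 + (k : ℝ) ^ 2) ^ s

/-- `c` represents a function belonging to the Sobolev space `H^s(𝕋)`. -/
def memHs (s : ℝ) (c : FC) : Prop := Summable fun k : ℤ => wt s k * ‖c k‖ ^ 2

/-- The `H^s(𝕋)` norm: `‖f‖²_{H^s} = Σ_{k∈ℤ} (1+k²)^s |f̂(k)|²`. -/
def hsNorm (s : ℝ) (c : FC) : ℝ := Real.sqrt (∑' k : ℤ, wt s k * ‖c k‖ ^ 2)

/-- The `H^s(𝕋)` inner product `(f,g)_{H^s} = Σ_{k∈ℤ} (1+k²)^s f̂(k) conj(ĝ(k))`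
(its real part; the sum is real for real-valued functions). -/
def hsInner (s : ℝ) (c d : FC) : ℝ :=
  (∑' k : ℤ, ((wt s k : ℂ) * (c k * (starRingEnd ℂ) (d k)))).re

/-- `c` represents a real-valued function (conjugate-symmetric coefficients). -/
def isReal (c : FC) : Prop := ∀ k : ℤ, c (-k) = (starRingEnd ℂ) (c k)

/-- The derivative `∂ₓ`, i.e. the Fourier multiplier `ik`. -/
def D1 (c : FC) : FC := fun k => Complex.I * (k : ℂ) * c k

/-- The pointwise product of functions, i.e. convolution of Fourier coefficients. -/
def mul (c d : FC) : FC := fun k => ∑' j : ℤ, c j * d (k - j)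

/-- The represented function, evaluated at `x ∈ ℝ`. -/
def eval (c : FC) (x : ℝ) : ℂ := ∑' k : ℤ, c k * Complex.exp (Complex.I * (k : ℂ) * (x : ℂ))

/-- The `L^∞` norm (supremum of the represented periodic function over ℝ). -/
def linfty (c : FC) : ℝ := ⨆ x : ℝ, ‖eval c x‖

/-- The `W^{1,∞}` norm. -/
def w1infty (c : FC) : ℝ := linfty c + linfty (D1 c)

/-- A Fourier multiplier operator with real symbol `m`. -/
def mult (m : ℤ → ℝ) (c : FC) : FC := fun k => (m k : ℂ) * c k

/-- The operator `(1-∂ₓ²)⁻¹`, i.e. the Fourier multiplier `(1+k²)⁻¹`. -/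
def helmInv : FC → FC := mult fun k => (1 + (k : ℝ) ^ 2)⁻¹

/-- The operator `1-∂ₓ²`, i.e. the Fourier multiplier `1+k²`. -/
def helm : FC → FC := mult fun k => 1 + (k : ℝ) ^ 2

/-- The operator `T̃_ε = (1-ε²∂ₓ²)⁻¹`, i.e. the Fourier multiplier `(1+ε²k²)⁻¹`. -/
def T (ε : ℝ) : FC → FC := mult fun k => (1 + ε ^ 2 * (k : ℝ) ^ 2)⁻¹

/-- The periodic Hilbert transform, i.e. the Fourier multiplier `-i·sgn(k)`. -/
def hilbert (c : FC) : FC := fun k => -Complex.I * (Int.sign k : ℂ) * c k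

/-- The Friedrichs-type mollifier `J_ε`, the Fourier multiplier `ĵ(εk)`. -/
def Jmol (jhat : ℝ → ℝ) (ε : ℝ) : FC → FC := mult fun k => jhat (ε * (k : ℝ))

/-- The generalized Lie derivative `𝓛_ξ f = ξ ∂ₓ f + (∂ₓ ξ) f`. -/
def lie (ξ c : FC) : FC := mul ξ (D1 c) + mul (D1 ξ) c

/-- `𝓛²_ξ f = 𝓛_ξ (𝓛_ξ f)`. -/
def lie2 (ξ c : FC) : FC := lie ξ (lie ξ c)

/-- The coefficientwise sum `Σ_{k∈ℕ} F k` of a sequence of functions. -/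
def tsumFC (F : ℕ → FC) : FC := fun m => ∑' k : ℕ, F k m

/-- The norm on the product space `H^{s₁}×H^{s₂}`. -/
def pairNorm (s₁ s₂ : ℝ) (c d : FC) : ℝ := Real.sqrt (hsNorm s₁ c ^ 2 + hsNorm s₂ d ^ 2)

/-- The inner product on the product space `H^{s₁}×H^{s₂}`:
`((c₁,d₁),(c₂,d₂)) ↦ (c₁,c₂)_{H^{s₁}} + (d₁,d₂)_{H^{s₂}}`. -/
def pairInner (s₁ s₂ : ℝ) (c₁ d₁ c₂ d₂ : FC) : ℝ := hsInner s₁ c₁ c₂ + hsInner s₂ d₁ d₂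

end FC

section aux9
open FC

lemma one_le_base (k : ℤ) : (1:ℝ) ≤ 1 + (k:ℝ)^2 := by nlinarith [sq_nonneg ((k:ℝ))]
lemma base_pos (k : ℤ) : (0:ℝ) < 1 + (k:ℝ)^2 := lt_of_lt_of_le one_pos (one_le_base k)
lemma wt_pos (a : ℝ) (k : ℤ) : 0 < wt a k := Real.rpow_pos_of_pos (base_pos k) a
lemma one_le_wt {a : ℝ} (ha : 0 ≤ a) (k : ℤ) : 1 ≤ wt a k := Real.one_le_rpow (one_le_base k) ha
lemma wt_mono {a b : ℝ} (h : a ≤ b) (k : ℤ) : wt a k ≤ wt b k :=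
  Real.rpow_le_rpow_of_exponent_le (one_le_base k) h
lemma wt_mul (a b : ℝ) (k : ℤ) : wt a k * wt b k = wt (a+b) k :=
  (Real.rpow_add (base_pos k) a b).symm
lemma wt_neg_idx (a : ℝ) (k : ℤ) : wt a (-k) = wt a k := by simp [wt]
lemma abs_le_wt_half (k : ℤ) : |(k:ℝ)| ≤ wt (1/2) k := by
  rw [show wt (1/2) k = Real.sqrt (1 + (k:ℝ)^2) by
    rw [Real.sqrt_eq_rpow]; rfl]
  rw [show |(k:ℝ)| = Real.sqrt ((k:ℝ)^2) by rw [Real.sqrt_sq_eq_abs]]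
  exact Real.sqrt_le_sqrt (by nlinarith)
lemma peetre {a : ℝ} (ha : 0 ≤ a) (k j : ℤ) : wt a k ≤ 2^a * (wt a j * wt a (k-j)) := by
  have h : (1:ℝ) + (k:ℝ)^2 ≤ 2 * ((1 + (j:ℝ)^2) * (1 + ((k:ℝ)-(j:ℝ))^2)) := by
    nlinarith [sq_nonneg ((k:ℝ) - 2*(j:ℝ)), sq_nonneg ((j:ℝ)*((k:ℝ)-(j:ℝ))), sq_nonneg ((k:ℝ)-(j:ℝ)), sq_nonneg (j:ℝ)]
  calc wt a k ≤ (2 * ((1 + (j:ℝ)^2) * (1 + ((k:ℝ)-(j:ℝ))^2)))^a :=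
        Real.rpow_le_rpow (le_of_lt (base_pos k)) h ha
    _ = 2^a * (wt a j * wt a (k-j)) := by
        rw [Real.mul_rpow (by norm_num) (by positivity), Real.mul_rpow (by positivity) (by positivity)]
        simp [wt]

lemma summable_wt_neg_one : Summable fun k : ℤ => wt (-1) k := by
  have h1 : Summable fun n : ℕ => 2 * ((1:ℝ)/(n+1)^2) := by
    have := (summable_nat_add_iff (f := fun n : ℕ => (1:ℝ)/(n:ℝ)^2) 1).2
      (Real.summable_one_div_nat_pow.mpr one_lt_two)
    exact this.mul_left 2 |>.congr (fun n => by push_cast; ring)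
  have key : ∀ n : ℕ, wt (-1) (n:ℤ) ≤ 2 * ((1:ℝ)/(n+1)^2) := by
    intro n
    rw [show wt (-1) (n:ℤ) = ((1:ℝ) + (n:ℝ)^2)⁻¹ by
      rw [wt, Real.rpow_neg_one]; norm_num]
    rw [show (2:ℝ) * ((1:ℝ)/((n:ℝ)+1)^2) = ((((n:ℝ)+1)^2)/2)⁻¹ by field_simp]
    apply inv_anti₀ (by positivity)
    nlinarith [sq_nonneg ((n:ℝ) - 1)]
  apply Summable.of_nat_of_neg
  · exact h1.of_nonneg_of_le (fun n => (wt_pos _ _).le) key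
  · refine h1.of_nonneg_of_le (fun n => (wt_pos _ _).le) (fun n => ?_)
    rw [wt_neg_idx]; exact key n

variable {s a : ℝ} {c : FC}

lemma hsNorm_nonneg : 0 ≤ hsNorm s c := Real.sqrt_nonneg _

lemma hsNorm_sq (hc : memHs s c) : hsNorm s c ^ 2 = ∑' k : ℤ, wt s k * ‖c k‖ ^ 2 :=
  Real.sq_sqrt (tsum_nonneg fun k => mul_nonneg (wt_pos s k).le (sq_nonneg _))

lemma memHs_mono (hc : memHs s c) (h : a ≤ s) : Summable fun k : ℤ => wt a k * ‖c k‖ ^ 2 :=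
  hc.of_nonneg_of_le (fun k => mul_nonneg (wt_pos a k).le (sq_nonneg _))
    (fun k => mul_le_mul_of_nonneg_right (wt_mono h k) (sq_nonneg _))

lemma coeff_le (hc : memHs s c) (hs0 : 0 ≤ s) (k : ℤ) : ‖c k‖ ≤ hsNorm s c := by
  rw [hsNorm, show ‖c k‖ = Real.sqrt (‖c k‖^2) by rw [Real.sqrt_sq (norm_nonneg _)]]
  apply Real.sqrt_le_sqrt
  calc ‖c k‖^2 ≤ wt s k * ‖c k‖^2 :=
        le_mul_of_one_le_left (sq_nonneg _) (one_le_wt hs0 k)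
    _ ≤ ∑' k : ℤ, wt s k * ‖c k‖ ^ 2 :=
        Summable.le_tsum hc k (fun j _ => mul_nonneg (wt_pos s j).le (sq_nonneg _))

lemma ell1_summable (hc : memHs s c) (h : 2*a ≤ s - 1) : Summable fun k : ℤ => wt a k * ‖c k‖ := by
  have hb : Summable fun k : ℤ => (1/2) * (wt (-1) k + wt s k * ‖c k‖^2) :=
    ((summable_wt_neg_one.add hc).mul_left _)
  refine hb.of_nonneg_of_le (fun k => mul_nonneg (wt_pos a k).le (norm_nonneg _)) (fun k => ?_)
  have key : wt a k * ‖c k‖ = (wt (a - s/2) k) * (wt (s/2) k * ‖c k‖) := by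
    rw [← mul_assoc, wt_mul]; ring_nf
  rw [key]
  have h1 : (wt (a - s/2) k) * (wt (s/2) k * ‖c k‖) ≤
      ((wt (a - s/2) k)^2 + (wt (s/2) k * ‖c k‖)^2)/2 := by
    nlinarith [sq_nonneg (wt (a - s/2) k - wt (s/2) k * ‖c k‖)]
  refine h1.trans ?_
  have e1 : (wt (a - s/2) k)^2 = wt (2*a - s) k := by
    rw [sq, wt_mul]; ring_nf
  have e2 : (wt (s/2) k * ‖c k‖)^2 = wt s k * ‖c k‖^2 := by
    rw [mul_pow, sq, wt_mul]; ring_nf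
  rw [e1, e2]
  have := wt_mono (show 2*a - s ≤ -1 by linarith) k
  linarith

lemma ell1_bound (hc : memHs s c) (hs1 : 1 ≤ s) :
    ∑' k : ℤ, wt ((s-1)/2) k * ‖c k‖ ≤ Real.sqrt (∑' k : ℤ, wt (-1) k) * hsNorm s c := by
  have hsum : Summable fun k : ℤ => wt ((s-1)/2) k * ‖c k‖ :=
    ell1_summable hc (by linarith)
  refine Summable.tsum_le_of_sum_le hsum (fun F => ?_)
  have cs := Finset.sum_mul_sq_le_sq_mul_sq F (fun k => wt (-1/2) k)
    (fun k => wt (s/2) k * ‖c k‖)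
  have key : ∀ k : ℤ, wt (-1/2) k * (wt (s/2) k * ‖c k‖) = wt ((s-1)/2) k * ‖c k‖ := by
    intro k; rw [← mul_assoc, wt_mul]; ring_nf
  rw [Finset.sum_congr rfl (fun k _ => key k)] at cs
  have h1 : ∑ k ∈ F, wt (-1/2) k ^ 2 ≤ ∑' k : ℤ, wt (-1) k := by
    have e : ∀ k : ℤ, wt (-1/2) k ^ 2 = wt (-1) k := fun k => by rw [sq, wt_mul]; norm_num
    calc ∑ k ∈ F, wt (-1/2) k ^ 2 = ∑ k ∈ F, wt (-1) k := Finset.sum_congr rfl fun k _ => e k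
      _ ≤ _ := Summable.sum_le_tsum F (fun k _ => (wt_pos _ _).le) summable_wt_neg_one
  have h2 : ∑ k ∈ F, (wt (s/2) k * ‖c k‖) ^ 2 ≤ hsNorm s c ^ 2 := by
    rw [hsNorm_sq hc]
    have e : ∀ k : ℤ, (wt (s/2) k * ‖c k‖)^2 = wt s k * ‖c k‖^2 := fun k => by
      rw [mul_pow, sq, wt_mul]; ring_nf
    calc ∑ k ∈ F, (wt (s/2) k * ‖c k‖)^2 = ∑ k ∈ F, wt s k * ‖c k‖^2 :=
          Finset.sum_congr rfl fun k _ => e k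
      _ ≤ _ := Summable.sum_le_tsum F (fun k _ => mul_nonneg (wt_pos _ _).le (sq_nonneg _)) hc
  have hnn : 0 ≤ ∑ k ∈ F, wt ((s-1)/2) k * ‖c k‖ :=
    Finset.sum_nonneg fun k _ => mul_nonneg (wt_pos _ _).le (norm_nonneg _)
  have : (∑ k ∈ F, wt ((s-1)/2) k * ‖c k‖)^2 ≤ (∑' k : ℤ, wt (-1) k) * hsNorm s c ^ 2 := by
    refine cs.trans ?_
    have hz : (0:ℝ) ≤ ∑' k : ℤ, wt (-1) k := tsum_nonneg fun k => (wt_pos _ _).le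
    exact mul_le_mul h1 h2 (Finset.sum_nonneg fun k _ => sq_nonneg _) hz
  calc ∑ k ∈ F, wt ((s-1)/2) k * ‖c k‖
      = Real.sqrt ((∑ k ∈ F, wt ((s-1)/2) k * ‖c k‖)^2) := (Real.sqrt_sq hnn).symm
    _ ≤ Real.sqrt ((∑' k : ℤ, wt (-1) k) * hsNorm s c ^ 2) := Real.sqrt_le_sqrt this
    _ = Real.sqrt (∑' k : ℤ, wt (-1) k) * hsNorm s c := by
        rw [Real.sqrt_mul (tsum_nonneg fun k => (wt_pos _ _).le), Real.sqrt_sq hsNorm_nonneg]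

lemma sq_le_of_mem_uIcc {t x y : ℝ} (h : t ∈ Set.uIcc y x) : t^2 ≤ max (x^2) (y^2) := by
  rw [Set.mem_uIcc] at h
  rcases h with ⟨h1, h2⟩ | ⟨h1, h2⟩ <;> rcases le_total 0 t with ht | ht
  · exact le_max_of_le_left (by nlinarith)
  · exact le_max_of_le_right (by nlinarith)
  · exact le_max_of_le_right (by nlinarith)
  · exact le_max_of_le_left (by nlinarith)

lemma peetre_real (x y : ℝ) : 1 + y^2 ≤ 2*((1+x^2)*(1+(x-y)^2)) := by
  nlinarith [sq_nonneg (y - 2*x), sq_nonneg (x*(x-y)), sq_nonneg (x-y), sq_nonneg x]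

lemma mult_bound_real {σ : ℝ} (hσ : 0 ≤ σ) (x y : ℝ) :
    |x*(1+x^2)^σ - y*(1+y^2)^σ| ≤
      (1+2*σ) * 2^(σ/2) * ((1+(x-y)^2)^((σ+1)/2) * ((1+x^2)^(σ/2) * (1+y^2)^(σ/2))) := by
  set M : ℝ := (1+2*σ) * 2^(σ/2) * ((1+(x-y)^2)^(σ/2) * ((1+x^2)^(σ/2) * (1+y^2)^(σ/2))) with hM
  have hpos : ∀ t : ℝ, (0:ℝ) < 1 + t^2 := fun t => by positivity
  set g' : ℝ → ℝ := fun t => 1*(1+t^2)^σ + t*(2*t*σ*(1+t^2)^(σ-1)) with hg'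
  have hd : ∀ t ∈ Set.uIcc (y:ℝ) x, HasDerivWithinAt (fun t : ℝ => t*(1+t^2)^σ) (g' t) (Set.uIcc y x) t := by
    intro t _
    have h1 : HasDerivAt (fun t : ℝ => 1+t^2) (2*t) t := by
      simpa using ((hasDerivAt_pow 2 t).const_add 1)
    have h2 : HasDerivAt (fun t : ℝ => (1+t^2)^σ) (2*t*σ*(1+t^2)^(σ-1)) t :=
      h1.rpow_const (Or.inl (hpos t).ne')
    exact ((hasDerivAt_id t).mul h2).hasDerivWithinAt
  have hbound : ∀ t ∈ Set.uIcc (y:ℝ) x, ‖g' t‖ ≤ M := by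
    intro t ht
    have egt : g' t = (1+t^2)^σ + 2*σ*(t^2*(1+t^2)^(σ-1)) := by simp only [hg']; ring
    have h3 : t^2*(1+t^2)^(σ-1) ≤ (1+t^2)^σ := by
      have : (1+t^2)*(1+t^2)^(σ-1) = (1+t^2)^σ := by
        rw [show (1+t^2)*(1+t^2)^(σ-1) = (1+t^2)^(1:ℝ)*(1+t^2)^(σ-1) by rw [Real.rpow_one],
          ← Real.rpow_add (hpos t)]; ring_nf
      nlinarith [Real.rpow_pos_of_pos (hpos t) (σ-1)]
    have hg'nn : 0 ≤ g' t := by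
      rw [egt]
      have h6 := Real.rpow_pos_of_pos (hpos t) σ
      have h7 := Real.rpow_pos_of_pos (hpos t) (σ-1)
      nlinarith [sq_nonneg t, mul_nonneg (mul_nonneg hσ (sq_nonneg t)) h7.le]
    rw [Real.norm_eq_abs, abs_of_nonneg hg'nn, egt]
    have h4 : (1+t^2)^σ + 2*σ*(t^2*(1+t^2)^(σ-1)) ≤ (1+2*σ)*(1+t^2)^σ := by
      nlinarith [mul_le_mul_of_nonneg_left h3 (by linarith : (0:ℝ) ≤ 2*σ)]
    refine h4.trans ?_
    have h5 : (1+t^2)^σ ≤ 2^(σ/2) * ((1+(x-y)^2)^(σ/2) * ((1+x^2)^(σ/2) * (1+y^2)^(σ/2))) := by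
      have hsq := sq_le_of_mem_uIcc ht
      rcases le_total (x^2) (y^2) with hc | hc
      · have ht2 : 1 + t^2 ≤ 1 + y^2 := by
          have := max_eq_right hc ▸ hsq; linarith [hsq.trans_eq (max_eq_right hc)]
        have key : (1+t^2)^σ ≤ ((1+y^2)^(σ/2)) * (2*((1+x^2)*(1+(x-y)^2)))^(σ/2) := by
          calc (1+t^2)^σ = (1+t^2)^(σ/2) * (1+t^2)^(σ/2) := by
                rw [← Real.rpow_add (hpos t)]; ring_nf
            _ ≤ ((1+y^2)^(σ/2)) * (2*((1+x^2)*(1+(x-y)^2)))^(σ/2) := by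
                apply mul_le_mul
                · exact Real.rpow_le_rpow (hpos t).le ht2 (by linarith)
                · exact Real.rpow_le_rpow (hpos t).le (ht2.trans (peetre_real x y)) (by linarith)
                · positivity
                · positivity
        refine key.trans (le_of_eq ?_)
        rw [Real.mul_rpow (by norm_num) (by positivity), Real.mul_rpow (by positivity) (by positivity)]
        ring
      · have ht2 : 1 + t^2 ≤ 1 + x^2 := by linarith [hsq.trans_eq (max_eq_left hc)]
        have hpe : 1 + x^2 ≤ 2*((1+y^2)*(1+(x-y)^2)) := by
          have := peetre_real y x; nlinarith [sq_nonneg (x-y), sq_nonneg (y-x)]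
        have key : (1+t^2)^σ ≤ ((1+x^2)^(σ/2)) * (2*((1+y^2)*(1+(x-y)^2)))^(σ/2) := by
          calc (1+t^2)^σ = (1+t^2)^(σ/2) * (1+t^2)^(σ/2) := by
                rw [← Real.rpow_add (hpos t)]; ring_nf
            _ ≤ _ := by
                apply mul_le_mul
                · exact Real.rpow_le_rpow (hpos t).le ht2 (by linarith)
                · exact Real.rpow_le_rpow (hpos t).le (ht2.trans hpe) (by linarith)
                · positivity
                · positivity
        refine key.trans (le_of_eq ?_)
        rw [Real.mul_rpow (by norm_num) (by positivity), Real.mul_rpow (by positivity) (by positivity)]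
        ring
    calc (1+2*σ)*(1+t^2)^σ ≤ (1+2*σ)*(2^(σ/2) * ((1+(x-y)^2)^(σ/2) * ((1+x^2)^(σ/2) * (1+y^2)^(σ/2)))) :=
          mul_le_mul_of_nonneg_left h5 (by linarith)
      _ = M := by rw [hM]; ring
  have mvt := (convex_uIcc (y:ℝ) x).norm_image_sub_le_of_norm_hasDerivWithin_le hd hbound
    (Set.left_mem_uIcc) (Set.right_mem_uIcc)
  rw [Real.norm_eq_abs, Real.norm_eq_abs] at mvt
  refine mvt.trans ?_
  have habs : |x - y| ≤ (1+(x-y)^2)^((1:ℝ)/2) := by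
    rw [show ((1:ℝ)+(x-y)^2)^((1:ℝ)/2) = Real.sqrt (1+(x-y)^2) by rw [Real.sqrt_eq_rpow]]
    rw [show |x-y| = Real.sqrt ((x-y)^2) by rw [Real.sqrt_sq_eq_abs]]
    exact Real.sqrt_le_sqrt (by nlinarith)
  have hMnn : 0 ≤ M := by rw [hM]; positivity
  have hre : (1+(x-y)^2)^(σ/2) * (1+(x-y)^2)^((1:ℝ)/2) = (1+(x-y)^2)^((σ+1)/2) := by
    rw [← Real.rpow_add (by positivity : (0:ℝ) < 1+(x-y)^2)]; ring_nf
  calc M * |x - y| ≤ M * (1+(x-y)^2)^((1:ℝ)/2) := mul_le_mul_of_nonneg_left habs hMnn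
    _ = (1+2*σ) * 2^(σ/2) * ((1+(x-y)^2)^((σ+1)/2) * ((1+x^2)^(σ/2) * (1+y^2)^(σ/2))) := by
        rw [hM, ← hre]; ring

lemma mult_bound {σ : ℝ} (hσ : 0 ≤ σ) (k j : ℤ) :
    |(k:ℝ)*wt σ k - (j:ℝ)*wt σ j| ≤
      (1+2*σ)*2^(σ/2) * (wt ((σ+1)/2) (k-j) * (wt (σ/2) k * wt (σ/2) j)) := by
  have := mult_bound_real hσ (k:ℝ) (j:ℝ)
  simpa [wt, Int.cast_sub] using this

def shearE1 : ℤ×ℤ ≃ ℤ×ℤ where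
  toFun p := (p.1, p.1 - p.2)
  invFun p := (p.1, p.1 - p.2)
  left_inv p := by simp
  right_inv p := by simp

def shearE2 : ℤ×ℤ ≃ ℤ×ℤ where
  toFun p := (p.2, p.1 - p.2)
  invFun q := (q.1 + q.2, q.1)
  left_inv p := by simp
  right_inv q := by simp

lemma prod_fact {g h : ℤ → ℝ} (Hg : Summable g) (Hh : Summable h)
    (hg : ∀ k, 0 ≤ g k) (hh : ∀ k, 0 ≤ h k) :
    Summable (fun q : ℤ×ℤ => g q.1 * h q.2) ∧
      ∑' q : ℤ×ℤ, g q.1 * h q.2 = (∑' k, g k) * (∑' m, h m) := by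
  have hsum : Summable (fun q : ℤ×ℤ => g q.1 * h q.2) := Hg.mul_of_nonneg Hh hg hh
  refine ⟨hsum, ?_⟩
  rw [Summable.tsum_prod hsum]
  simp_rw [tsum_mul_left, tsum_mul_right]

lemma shear1 {g h : ℤ → ℝ} (Hg : Summable g) (Hh : Summable h)
    (hg : ∀ k, 0 ≤ g k) (hh : ∀ k, 0 ≤ h k) :
    Summable (fun p : ℤ×ℤ => g p.1 * h (p.1 - p.2)) ∧
      ∑' p : ℤ×ℤ, g p.1 * h (p.1 - p.2) = (∑' k, g k) * (∑' m, h m) := by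
  obtain ⟨hsum, heq⟩ := prod_fact Hg Hh hg hh
  have hcomp : (fun q : ℤ×ℤ => g q.1 * h q.2) ∘ shearE1 = fun p : ℤ×ℤ => g p.1 * h (p.1 - p.2) := rfl
  constructor
  · rw [← hcomp]; exact (shearE1.summable_iff.mpr hsum)
  · rw [← heq, ← shearE1.tsum_eq (fun q : ℤ×ℤ => g q.1 * h q.2)]; rfl

lemma shear2 {g h : ℤ → ℝ} (Hg : Summable g) (Hh : Summable h)
    (hg : ∀ k, 0 ≤ g k) (hh : ∀ k, 0 ≤ h k) :
    Summable (fun p : ℤ×ℤ => g p.2 * h (p.1 - p.2)) ∧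
      ∑' p : ℤ×ℤ, g p.2 * h (p.1 - p.2) = (∑' k, g k) * (∑' m, h m) := by
  obtain ⟨hsum, heq⟩ := prod_fact Hg Hh hg hh
  have hcomp : (fun q : ℤ×ℤ => g q.1 * h q.2) ∘ shearE2 = fun p : ℤ×ℤ => g p.2 * h (p.1 - p.2) := rfl
  constructor
  · rw [← hcomp]; exact (shearE2.summable_iff.mpr hsum)
  · rw [← heq, ← shearE2.tsum_eq (fun q : ℤ×ℤ => g q.1 * h q.2)]; rfl

section conv
variable {u v : FC}

lemma ell1_plain (hc : memHs s c) (hs1 : 1 ≤ s) : Summable fun j : ℤ => ‖c j‖ := by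
  have := ell1_summable hc (show 2*0 ≤ s - 1 by linarith)
  refine this.congr (fun j => ?_)
  rw [wt, Real.rpow_zero, one_mul]

lemma ell1_abs (hc : memHs s c) (hs1 : 3 ≤ s) : Summable fun j : ℤ => |(j:ℝ)| * ‖c j‖ := by
  have h := ell1_summable hc (show 2*(1/2) ≤ s - 1 by linarith)
  refine h.of_nonneg_of_le (fun j => mul_nonneg (abs_nonneg _) (norm_nonneg _)) (fun j => ?_)
  exact mul_le_mul_of_nonneg_right (abs_le_wt_half j) (norm_nonneg _)

lemma summable_shift (f : ℤ → ℝ) (hf : Summable f) (k : ℤ) : Summable fun j : ℤ => f (k - j) := by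
  have : (fun j : ℤ => f (k - j)) = f ∘ (Equiv.subLeft k) := rfl
  rw [this]
  exact (Equiv.subLeft k).summable_iff.mpr hf

/-- summability of the convolution-with-derivative integrand -/
lemma summable_cd1 (hc : memHs s c) (hd : memHs s d) (hs3 : 3 ≤ s) (k : ℤ) :
    Summable fun j : ℤ => c j * (Complex.I * ((k - j : ℤ) : ℂ) * d (k - j)) := by
  apply Summable.of_norm
  have hb : Summable fun j : ℤ => hsNorm s c * (|((k - j : ℤ):ℝ)| * ‖d (k - j)‖) :=
    (summable_shift (fun m : ℤ => |(m:ℝ)| * ‖d m‖) (ell1_abs hd hs3) k).mul_left _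
  refine hb.of_nonneg_of_le (fun j => norm_nonneg _) (fun j => ?_)
  rw [norm_mul, norm_mul, norm_mul, Complex.norm_I, one_mul, Complex.norm_intCast]
  have h1 := coeff_le hc (by linarith) j
  have h2 : (0:ℝ) ≤ |((k - j : ℤ):ℝ)| * ‖d (k - j)‖ :=
    mul_nonneg (abs_nonneg _) (norm_nonneg _)
  calc ‖c j‖ * (‖((k - j : ℤ):ℝ)‖ * ‖d (k - j)‖) ≤
        hsNorm s c * (|((k - j : ℤ):ℝ)| * ‖d (k - j)‖) := by
          rw [Real.norm_eq_abs]
          exact mul_le_mul_of_nonneg_right h1 h2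
    _ = _ := rfl

lemma summable_cd0 (hc : memHs s c) (hd : memHs s d) (hs3 : 3 ≤ s) (k : ℤ) :
    Summable fun j : ℤ => c j * d (k - j) := by
  apply Summable.of_norm
  have hb : Summable fun j : ℤ => hsNorm s c * ‖d (k - j)‖ :=
    (summable_shift _ (ell1_plain hd (by linarith)) k).mul_left _
  refine hb.of_nonneg_of_le (fun j => norm_nonneg _) (fun j => ?_)
  rw [norm_mul]
  exact mul_le_mul_of_nonneg_right (coeff_le hc (by linarith) j) (norm_nonneg _)

lemma mulD1_eq (hc : memHs s c) (hs3 : 3 ≤ s) (k : ℤ) :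
    FC.mul c (FC.D1 c) k = Complex.I * (k:ℂ) / 2 * ∑' j : ℤ, c j * c (k - j) := by
  set f : ℤ → ℂ := fun j => c j * (Complex.I * ((k - j : ℤ) : ℂ) * c (k - j)) with hf
  have hfs : Summable f := summable_cd1 hc hc hs3 k
  have hfrev : Summable fun j : ℤ => f (k - j) := by
    have : (fun j : ℤ => f (k - j)) = f ∘ (Equiv.subLeft k) := rfl
    rw [this]; exact (Equiv.subLeft k).summable_iff.mpr hfs
  have hrev : ∑' j : ℤ, f (k - j) = ∑' j : ℤ, f j := by
    rw [← (Equiv.subLeft k).tsum_eq f]; rfl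
  have key : ∀ j : ℤ, f j + f (k - j) = Complex.I * (k:ℂ) * (c j * c (k - j)) := by
    intro j
    have e : (k - (k - j) : ℤ) = j := by ring
    rw [hf]; simp only [e]
    push_cast
    ring
  have hmul : FC.mul c (FC.D1 c) k = ∑' j, f j := rfl
  have h2 : (∑' j, f j) + (∑' j : ℤ, f (k - j)) = Complex.I * (k:ℂ) * ∑' j : ℤ, c j * c (k - j) := by
    rw [← Summable.tsum_add hfs hfrev, ← tsum_mul_left]
    exact tsum_congr key
  rw [hrev] at h2
  rw [hmul]
  field_simp
  linear_combination h2

lemma conv_swap (hc : memHs s c) (hd : memHs s d) (hs3 : 3 ≤ s) (k : ℤ) :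
    ∑' j : ℤ, c j * d (k - j) = ∑' j : ℤ, d j * c (k - j) := by
  set g : ℤ → ℂ := fun j => d j * c (k - j) with hg
  rw [← (Equiv.subLeft k).tsum_eq g]
  apply tsum_congr (fun j => ?_)
  have e : (k - (k - j) : ℤ) = j := by ring
  simp only [hg, Equiv.subLeft_apply, e]
  ring

lemma key_coeff (hu : memHs s u) (hv : memHs s v) (hs3 : 3 ≤ s) (k : ℤ) :
    (FC.mul v (FC.D1 v) - FC.mul u (FC.D1 u)) k
      = -(Complex.I * (k:ℂ) / 2) * ∑' j : ℤ, (u - v) j * (u + v) (k - j) := by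
  have hsub : (FC.mul v (FC.D1 v) - FC.mul u (FC.D1 u)) k
      = FC.mul v (FC.D1 v) k - FC.mul u (FC.D1 u) k := rfl
  rw [hsub, mulD1_eq hu hs3 k, mulD1_eq hv hs3 k]
  have huu := summable_cd0 hu hu hs3 k
  have huv := summable_cd0 hu hv hs3 k
  have hvu := summable_cd0 hv hu hs3 k
  have hvv := summable_cd0 hv hv hs3 k
  have expand : ∑' j : ℤ, (u - v) j * (u + v) (k - j)
      = ((∑' j : ℤ, u j * u (k-j)) + (∑' j : ℤ, u j * v (k-j)))
        - ((∑' j : ℤ, v j * u (k-j)) + (∑' j : ℤ, v j * v (k-j))) := by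
    rw [← Summable.tsum_add huu huv, ← Summable.tsum_add hvu hvv, ← Summable.tsum_sub (huu.add huv) (hvu.add hvv)]
    apply tsum_congr (fun j => ?_)
    simp only [Pi.sub_apply, Pi.add_apply]
    ring
  rw [expand, conv_swap hu hv hs3 k]
  ring

lemma memHs_add (hu : memHs s u) (hv : memHs s v) : memHs s (u + v) := by
  refine ((hu.add hv).mul_left 2).of_nonneg_of_le
    (fun k => mul_nonneg (wt_pos _ _).le (sq_nonneg _)) (fun k => ?_)
  have h : ‖(u + v) k‖^2 ≤ 2*(‖u k‖^2 + ‖v k‖^2) := by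
    have := norm_add_le (u k) (v k)
    have hnn : (0:ℝ) ≤ ‖u k‖ := norm_nonneg _
    have hnn2 : (0:ℝ) ≤ ‖v k‖ := norm_nonneg _
    have : ‖(u+v) k‖ ≤ ‖u k‖ + ‖v k‖ := norm_add_le _ _
    nlinarith [sq_nonneg (‖u k‖ - ‖v k‖), norm_nonneg ((u+v) k)]
  calc wt s k * ‖(u + v) k‖^2 ≤ wt s k * (2*(‖u k‖^2 + ‖v k‖^2)) :=
        mul_le_mul_of_nonneg_left h (wt_pos _ _).le
    _ = 2 * (wt s k * ‖u k‖^2 + wt s k * ‖v k‖^2) := by ring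

lemma memHs_sub (hu : memHs s u) (hv : memHs s v) : memHs s (u - v) := by
  refine ((hu.add hv).mul_left 2).of_nonneg_of_le
    (fun k => mul_nonneg (wt_pos _ _).le (sq_nonneg _)) (fun k => ?_)
  have h : ‖(u - v) k‖^2 ≤ 2*(‖u k‖^2 + ‖v k‖^2) := by
    have : ‖(u-v) k‖ ≤ ‖u k‖ + ‖v k‖ := norm_sub_le _ _
    nlinarith [sq_nonneg (‖u k‖ - ‖v k‖), norm_nonneg ((u-v) k), norm_nonneg (u k), norm_nonneg (v k)]
  calc wt s k * ‖(u - v) k‖^2 ≤ wt s k * (2*(‖u k‖^2 + ‖v k‖^2)) :=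
        mul_le_mul_of_nonneg_left h (wt_pos _ _).le
    _ = 2 * (wt s k * ‖u k‖^2 + wt s k * ‖v k‖^2) := by ring

lemma isReal_sub (hu : isReal u) (hv : isReal v) : isReal (u - v) := by
  intro k
  simp only [Pi.sub_apply, hu k, hv k, map_sub]

def negSwapE : ℤ×ℤ ≃ ℤ×ℤ where
  toFun p := (-p.2, -p.1)
  invFun p := (-p.2, -p.1)
  left_inv p := by simp
  right_inv p := by simp

end conv


end aux9

section main
open FC
set_option maxHeartbeats 1000000

/-- Let `s > 11/2`.  There is `C = C(s) > 0` such that for all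
`u, v ∈ H^s(𝕋)`:
`|(v ∂ₓv − u ∂ₓu, u − v)_{H^{s-2}}| ≤ C (‖u‖_{H^s} + ‖v‖_{H^s}) ‖u − v‖²_{H^{s-2}}`. -/
theorem statement9 (s : ℝ) (hs : 11 / 2 < s) :
    ∃ C > (0 : ℝ), ∀ u v : FC,
      FC.memHs s u → FC.memHs s v → FC.isReal u → FC.isReal v →
      |FC.hsInner (s - 2) (FC.mul v (FC.D1 v) - FC.mul u (FC.D1 u)) (u - v)|
        ≤ C * (FC.hsNorm s u + FC.hsNorm s v) * FC.hsNorm (s - 2) (u - v) ^ 2 := by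
  have hs3 : (3:ℝ) ≤ s := by linarith
  set σ : ℝ := s - 2 with hσdef
  have hσ0 : (0:ℝ) ≤ σ := by simp only [hσdef]; linarith
  have hZ1 : (1:ℝ) ≤ ∑' k : ℤ, wt (-1) k := by
    have h0 : wt (-1) (0:ℤ) = 1 := by simp [wt]
    calc (1:ℝ) = wt (-1) (0:ℤ) := h0.symm
      _ ≤ ∑' k : ℤ, wt (-1) k := Summable.le_tsum summable_wt_neg_one 0 (fun j _ => (wt_pos _ _).le)
  have hZ0 : (0:ℝ) < ∑' k : ℤ, wt (-1) k := lt_of_lt_of_le one_pos hZ1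
  set Cσ : ℝ := (1+2*σ)*2^(σ/2) with hCσdef
  have hCσ0 : (0:ℝ) < Cσ := by
    have := Real.rpow_pos_of_pos (show (0:ℝ) < 2 by norm_num) (σ/2)
    rw [hCσdef]; positivity
  refine ⟨(1/4) * Cσ * Real.sqrt (∑' k : ℤ, wt (-1) k),
    by positivity, ?_⟩
  intro u v hu hv hru hrv
  set w : FC := u - v with hwdef
  set φ : FC := u + v with hφdef
  have hwmem : memHs s w := memHs_sub hu hv
  have hφmem : memHs s φ := memHs_add hu hv
  have hwreal : isReal w := isReal_sub hru hrv
  -- the double-indexed family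
  set F : ℤ×ℤ → ℂ := fun p =>
    (-(Complex.I * (p.1:ℂ) / 2) * ((wt σ p.1 : ℝ):ℂ) * (starRingEnd ℂ) (w p.1))
      * (w p.2 * φ (p.1 - p.2)) with hFdef
  set G : ℤ×ℤ → ℂ := fun p => F (negSwapE p) with hGdef
  -- weights
  set τ : ℝ := s/2 - 3/4 with hτdef
  have hτ0 : (0:ℝ) ≤ τ := by rw [hτdef]; linarith
  set x : ℤ → ℝ := fun k => wt (σ/2) k * ‖w k‖ with hxdef
  set y : ℤ → ℝ := fun k => wt τ k * ‖w k‖ with hydef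
  have hx2 : ∀ k, x k ^ 2 = wt σ k * ‖w k‖^2 := by
    intro k; rw [hxdef]; rw [mul_pow, sq, wt_mul]
    ring_nf
  have hy2 : ∀ k, y k ^ 2 = wt (2*τ) k * ‖w k‖^2 := by
    intro k; rw [hydef]; rw [mul_pow, sq, wt_mul]
    ring_nf
  have Hx2 : Summable (fun k => x k ^ 2) := by
    refine (memHs_mono hwmem (show σ ≤ s by rw [hσdef]; linarith)).congr (fun k => (hx2 k).symm)
  have Hy2 : Summable (fun k => y k ^ 2) := by
    refine (memHs_mono hwmem (show 2*τ ≤ s by rw [hτdef]; linarith)).congr (fun k => (hy2 k).symm)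
  have hxnn : ∀ k, 0 ≤ x k := fun k => mul_nonneg (wt_pos _ _).le (norm_nonneg _)
  have hynn : ∀ k, 0 ≤ y k := fun k => mul_nonneg (wt_pos _ _).le (norm_nonneg _)
  set h : ℤ → ℝ := fun m => Cσ * (wt ((σ+1)/2) m * ‖φ m‖) with hhdef
  have Hh : Summable h := by
    refine (ell1_summable hφmem (show 2*((σ+1)/2) ≤ s - 1 by rw [hσdef]; linarith)).mul_left Cσ
  have hhnn : ∀ m, 0 ≤ h m :=
    fun m => mul_nonneg hCσ0.le (mul_nonneg (wt_pos _ _).le (norm_nonneg _))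
  set h2 : ℤ → ℝ := fun m => wt τ m * ‖φ m‖ with hh2def
  have Hh2 : Summable h2 :=
    ell1_summable hφmem (show 2*τ ≤ s - 1 by rw [hτdef]; linarith)
  have hh2nn : ∀ m, 0 ≤ h2 m := fun m => mul_nonneg (wt_pos _ _).le (norm_nonneg _)
  -- norm bound for F
  have hFnormle : ∀ p : ℤ×ℤ, ‖F p‖ ≤
      (1/4) * 2^τ * (y p.1^2 * h2 (p.1 - p.2) + y p.2^2 * h2 (p.1 - p.2)) := by
    intro ⟨k, j⟩
    have hnorm : ‖F (k, j)‖ = |(k:ℝ)|/2 * wt σ k * (‖w k‖ * (‖w j‖ * ‖φ (k - j)‖)) := by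
      simp only [hFdef]
      rw [norm_mul, norm_mul, norm_mul]
      simp only [norm_neg, norm_div, norm_mul, Complex.norm_I, one_mul,
        Complex.norm_intCast, Complex.norm_real, RCLike.norm_conj, Real.norm_eq_abs,
        Complex.norm_ofNat, abs_of_pos (wt_pos σ k)]
      ring
    -- now the estimate
    have e2τ : 1/2 + σ = τ + τ := by rw [hσdef, hτdef]; ring
    have hk : |(k:ℝ)| * wt σ k ≤ wt τ k * wt τ k := by
      calc |(k:ℝ)| * wt σ k ≤ wt (1/2) k * wt σ k :=
            mul_le_mul_of_nonneg_right (abs_le_wt_half k) (wt_pos _ _).le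
        _ = wt τ k * wt τ k := by rw [wt_mul, wt_mul, e2τ]
    have hpk : wt τ k ≤ 2^τ * (wt τ j * wt τ (k - j)) := peetre hτ0 k j
    calc ‖F (k,j)‖ = (1/2) * ((|(k:ℝ)| * wt σ k) * (‖w k‖*(‖w j‖*‖φ (k-j)‖))) := by
          rw [hnorm]; ring
      _ ≤ (1/2) * ((wt τ k * wt τ k) * (‖w k‖*(‖w j‖*‖φ (k-j)‖))) := by
          apply mul_le_mul_of_nonneg_left
            (mul_le_mul_of_nonneg_right hk (by positivity)) (by norm_num)
      _ ≤ (1/2) * ((wt τ k * (2^τ * (wt τ j * wt τ (k - j)))) * (‖w k‖*(‖w j‖*‖φ (k-j)‖))) := by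
          apply mul_le_mul_of_nonneg_left
            (mul_le_mul_of_nonneg_right
              (mul_le_mul_of_nonneg_left hpk (wt_pos τ k).le) (by positivity)) (by norm_num)
      _ = (1/2) * 2^τ * (h2 (k-j) * (y k * y j)) := by simp only [hh2def, hydef]; ring
      _ ≤ (1/4) * 2^τ * (y k^2 * h2 (k-j) + y j^2 * h2 (k-j)) := by
          have hp2 : (0:ℝ) ≤ 2^τ := (Real.rpow_pos_of_pos (by norm_num) τ).le
          nlinarith [mul_nonneg (mul_nonneg hp2 (hh2nn (k-j))) (sq_nonneg (y k - y j))]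
  have HFnorm : Summable fun p : ℤ×ℤ => ‖F p‖ := by
    have hb : Summable fun p : ℤ×ℤ =>
        (1/4) * 2^τ * (y p.1^2 * h2 (p.1 - p.2) + y p.2^2 * h2 (p.1 - p.2)) :=
      (((shear1 Hy2 Hh2 (fun k => sq_nonneg _) hh2nn).1).add
        ((shear2 Hy2 Hh2 (fun k => sq_nonneg _) hh2nn).1)).mul_left _
    exact hb.of_nonneg_of_le (fun p => norm_nonneg _) hFnormle
  have HF : Summable F := HFnorm.of_norm
  have HG : Summable G := by
    rw [hGdef, show (fun p => F (negSwapE p)) = F ∘ negSwapE from rfl]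
    exact negSwapE.summable_iff.mpr HF
  have hGFsum : ∑' p : ℤ×ℤ, G p = ∑' p : ℤ×ℤ, F p := negSwapE.tsum_eq F
  -- step A : the inner product as a double sum
  have hinner : FC.hsInner σ (FC.mul v (FC.D1 v) - FC.mul u (FC.D1 u)) w
      = (∑' p : ℤ×ℤ, F p).re := by
    rw [FC.hsInner]
    congr 1
    rw [Summable.tsum_prod HF]
    apply tsum_congr (fun k => ?_)
    rw [key_coeff hu hv hs3 k]
    have : ∑' j : ℤ, F (k, j)
        = (-(Complex.I * (k:ℂ) / 2) * ((wt σ k : ℝ):ℂ) * (starRingEnd ℂ) (w k))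
            * ∑' j : ℤ, (w j * φ (k - j)) := by
      rw [← tsum_mul_left]
    rw [this, ← hwdef, ← hφdef]
    ring
  -- step C : symmetrization
  have hFplusG : ∀ p : ℤ×ℤ, F p + G p
      = (Complex.I/2) * ((((p.2:ℝ) * wt σ p.2 - (p.1:ℝ) * wt σ p.1 : ℝ)):ℂ)
          * (w p.2 * φ (p.1 - p.2) * (starRingEnd ℂ) (w p.1)) := by
    intro ⟨k, j⟩
    have hG1 : G (k, j) = (-(Complex.I * ((-j : ℤ):ℂ) / 2) * ((wt σ (-j) : ℝ):ℂ)
        * (starRingEnd ℂ) (w (-j))) * (w (-k) * φ ((-j) - (-k))) := rfl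
    have hidx : ((-j) - (-k) : ℤ) = k - j := by ring
    have hwj : (starRingEnd ℂ) (w (-j)) = w j := by rw [hwreal j]; exact Complex.conj_conj _
    have hwk : w (-k) = (starRingEnd ℂ) (w k) := hwreal k
    rw [hG1, hidx, hwj, hwk, wt_neg_idx]
    simp only [hFdef]
    push_cast
    ring
  have hFGnormle : ∀ p : ℤ×ℤ, ‖F p + G p‖ ≤
      (1/4) * (x p.1^2 * h (p.1 - p.2) + x p.2^2 * h (p.1 - p.2)) := by
    intro ⟨k, j⟩
    have hnrm : ‖F (k,j) + G (k,j)‖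
        = (1/2) * |(j:ℝ) * wt σ j - (k:ℝ) * wt σ k| * (‖w j‖ * (‖φ (k - j)‖ * ‖w k‖)) := by
      rw [hFplusG (k,j)]
      rw [norm_mul, norm_mul, norm_mul, norm_mul, norm_div, Complex.norm_I,
        Complex.norm_real, Real.norm_eq_abs, RCLike.norm_conj, Complex.norm_ofNat]
      ring
    have hmb : |(j:ℝ) * wt σ j - (k:ℝ) * wt σ k| ≤
        Cσ * (wt ((σ+1)/2) (k - j) * (wt (σ/2) k * wt (σ/2) j)) := by
      have := mult_bound hσ0 j k
      have hev : wt ((σ+1)/2) (j - k) = wt ((σ+1)/2) (k - j) := by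
        rw [show (j - k : ℤ) = -(k - j) by ring, wt_neg_idx]
      rw [hev] at this
      calc |(j:ℝ) * wt σ j - (k:ℝ) * wt σ k|
          ≤ (1+2*σ)*2^(σ/2) * (wt ((σ+1)/2) (k-j) * (wt (σ/2) j * wt (σ/2) k)) := this
        _ = Cσ * (wt ((σ+1)/2) (k - j) * (wt (σ/2) k * wt (σ/2) j)) := by
            rw [hCσdef]; ring
    calc ‖F (k,j) + G (k,j)‖
        = (1/2) * |(j:ℝ) * wt σ j - (k:ℝ) * wt σ k| * (‖w j‖ * (‖φ (k - j)‖ * ‖w k‖)) := hnrm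
      _ ≤ (1/2) * (Cσ * (wt ((σ+1)/2) (k - j) * (wt (σ/2) k * wt (σ/2) j)))
            * (‖w j‖ * (‖φ (k - j)‖ * ‖w k‖)) := by
          apply mul_le_mul_of_nonneg_right
            (mul_le_mul_of_nonneg_left hmb (by norm_num)) (by positivity)
      _ = (1/2) * (h (k - j) * (x k * x j)) := by simp only [hhdef, hxdef]; ring
      _ ≤ (1/4) * (x k^2 * h (k - j) + x j^2 * h (k - j)) := by
          nlinarith [mul_nonneg (hhnn (k-j)) (sq_nonneg (x k - x j))]
  set B : ℤ×ℤ → ℝ := fun p => (1/4) * (x p.1^2 * h (p.1 - p.2) + x p.2^2 * h (p.1 - p.2))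
    with hBdef
  have HB : Summable B :=
    (((shear1 Hx2 Hh (fun k => sq_nonneg _) hhnn).1).add
      ((shear2 Hx2 Hh (fun k => sq_nonneg _) hhnn).1)).mul_left _
  have HFGnorm : Summable fun p : ℤ×ℤ => ‖F p + G p‖ :=
    HB.of_nonneg_of_le (fun p => norm_nonneg _) hFGnormle
  have hBsum : ∑' p : ℤ×ℤ, B p = (1/2) * ((∑' m : ℤ, h m) * (∑' k : ℤ, x k^2)) := by
    rw [hBdef]
    rw [tsum_mul_left, Summable.tsum_add ((shear1 Hx2 Hh (fun k => sq_nonneg _) hhnn).1)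
      ((shear2 Hx2 Hh (fun k => sq_nonneg _) hhnn).1)]
    rw [(shear1 Hx2 Hh (fun k => sq_nonneg _) hhnn).2,
      (shear2 Hx2 Hh (fun k => sq_nonneg _) hhnn).2]
    ring
  -- final chain
  have hmain : |FC.hsInner σ (FC.mul v (FC.D1 v) - FC.mul u (FC.D1 u)) w|
      ≤ (1/4) * ((∑' m : ℤ, h m) * (∑' k : ℤ, x k^2)) := by
    rw [hinner]
    have h1 : |(∑' p : ℤ×ℤ, F p).re| ≤ ‖∑' p : ℤ×ℤ, F p‖ := Complex.abs_re_le_norm _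
    have h2 : ‖∑' p : ℤ×ℤ, F p‖ = (1/2) * ‖∑' p : ℤ×ℤ, (F p + G p)‖ := by
      rw [Summable.tsum_add HF HG, hGFsum]
      rw [show (∑' p : ℤ×ℤ, F p) + (∑' p : ℤ×ℤ, F p) = (2:ℂ) * ∑' p : ℤ×ℤ, F p by ring]
      rw [norm_mul, Complex.norm_ofNat]
      ring
    have h3 : ‖∑' p : ℤ×ℤ, (F p + G p)‖ ≤ ∑' p : ℤ×ℤ, ‖F p + G p‖ :=
      norm_tsum_le_tsum_norm HFGnorm
    have h4 : ∑' p : ℤ×ℤ, ‖F p + G p‖ ≤ ∑' p : ℤ×ℤ, B p :=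
      Summable.tsum_le_tsum hFGnormle HFGnorm HB
    calc |(∑' p : ℤ×ℤ, F p).re| ≤ ‖∑' p : ℤ×ℤ, F p‖ := h1
      _ = (1/2) * ‖∑' p : ℤ×ℤ, (F p + G p)‖ := h2
      _ ≤ (1/2) * ∑' p : ℤ×ℤ, ‖F p + G p‖ := by linarith
      _ ≤ (1/2) * ∑' p : ℤ×ℤ, B p := by linarith
      _ = (1/4) * ((∑' m : ℤ, h m) * (∑' k : ℤ, x k^2)) := by rw [hBsum]; ring
  -- bounding the two series
  have hxsum : ∑' k : ℤ, x k^2 = FC.hsNorm σ w ^ 2 := by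
    rw [hsNorm_sq (memHs_mono hwmem (show σ ≤ s by rw [hσdef]; linarith))]
    exact tsum_congr hx2
  have hxsumnn : (0:ℝ) ≤ ∑' k : ℤ, x k^2 := tsum_nonneg (fun k => sq_nonneg _)
  have hhsum : ∑' m : ℤ, h m ≤ Cσ * (Real.sqrt (∑' k : ℤ, wt (-1) k) * (FC.hsNorm s u + FC.hsNorm s v)) := by
    rw [hhdef, tsum_mul_left]
    apply mul_le_mul_of_nonneg_left ?_ hCσ0.le
    have hexp : (σ+1)/2 = (s-1)/2 := by rw [hσdef]; ring
    have hφ1 : Summable fun m : ℤ => wt ((s-1)/2) m * ‖φ m‖ :=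
      ell1_summable hφmem (by linarith)
    have hu1 : Summable fun m : ℤ => wt ((s-1)/2) m * ‖u m‖ :=
      ell1_summable hu (by linarith)
    have hv1 : Summable fun m : ℤ => wt ((s-1)/2) m * ‖v m‖ :=
      ell1_summable hv (by linarith)
    have hpt : ∀ m : ℤ, wt ((s-1)/2) m * ‖φ m‖
        ≤ wt ((s-1)/2) m * ‖u m‖ + wt ((s-1)/2) m * ‖v m‖ := by
      intro m
      have : ‖φ m‖ ≤ ‖u m‖ + ‖v m‖ := norm_add_le _ _
      nlinarith [wt_pos ((s-1)/2) m]
    calc ∑' m : ℤ, wt ((σ+1)/2) m * ‖φ m‖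
        = ∑' m : ℤ, wt ((s-1)/2) m * ‖φ m‖ := by rw [hexp]
      _ ≤ ∑' m : ℤ, (wt ((s-1)/2) m * ‖u m‖ + wt ((s-1)/2) m * ‖v m‖) :=
          Summable.tsum_le_tsum hpt hφ1 (hu1.add hv1)
      _ = (∑' m : ℤ, wt ((s-1)/2) m * ‖u m‖) + ∑' m : ℤ, wt ((s-1)/2) m * ‖v m‖ :=
          Summable.tsum_add hu1 hv1
      _ ≤ Real.sqrt (∑' k : ℤ, wt (-1) k) * FC.hsNorm s u + Real.sqrt (∑' k : ℤ, wt (-1) k) * FC.hsNorm s v := by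
          linarith [ell1_bound hu (by linarith : (1:ℝ) ≤ s),
            ell1_bound hv (by linarith : (1:ℝ) ≤ s)]
      _ = Real.sqrt (∑' k : ℤ, wt (-1) k) * (FC.hsNorm s u + FC.hsNorm s v) := by ring
  have hnormsnn : (0:ℝ) ≤ FC.hsNorm s u + FC.hsNorm s v :=
    add_nonneg hsNorm_nonneg hsNorm_nonneg
  calc |FC.hsInner σ (FC.mul v (FC.D1 v) - FC.mul u (FC.D1 u)) w|
      ≤ (1/4) * ((∑' m : ℤ, h m) * (∑' k : ℤ, x k^2)) := hmain
    _ ≤ (1/4) * ((Cσ * (Real.sqrt (∑' k : ℤ, wt (-1) k) * (FC.hsNorm s u + FC.hsNorm s v))) * (∑' k : ℤ, x k^2)) := by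
        apply mul_le_mul_of_nonneg_left
          (mul_le_mul_of_nonneg_right hhsum hxsumnn) (by norm_num)
    _ = (1/4) * Cσ * Real.sqrt (∑' k : ℤ, wt (-1) k) * (FC.hsNorm s u + FC.hsNorm s v) * FC.hsNorm σ w ^ 2 := by
        rw [hxsum]; ring

end main
end
end

section
/- Let s > 11/2. There is a constant C = C(s) > 0 such that for all u, v ∈ H^s(𝕋) and all η, ρ ∈ H^{s-1}(𝕋): |(v ∂_x ρ − u ∂_x η, η − ρ)_{H^{s-3}}| ≤ C (‖v‖_{H^s} ‖η − ρ‖²_{H^{s-3}} + ‖η‖²_{H^{s-1}} ‖u − v‖²_{H^{s-3}} + ‖η − ρ‖²_{H^{s-3}}). -/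
noncomputable section
open scoped BigOperators

-- AUX BEGIN
namespace St10
open FC Real

lemma P_pos (k : ℤ) : (0:ℝ) < 1 + (k:ℝ)^2 := by positivity
lemma one_le_P (k : ℤ) : (1:ℝ) ≤ 1 + (k:ℝ)^2 := by nlinarith [sq_nonneg (k:ℝ)]

lemma wt_pos (s : ℝ) (k : ℤ) : 0 < wt s k := Real.rpow_pos_of_pos (P_pos k) s
lemma wt_nonneg (s : ℝ) (k : ℤ) : 0 ≤ wt s k := (wt_pos s k).le
lemma one_le_wt {s : ℝ} (hs : 0 ≤ s) (k : ℤ) : 1 ≤ wt s k := by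
  rw [show (1:ℝ) = (1 + (k:ℝ)^2) ^ (0:ℝ) by simp]
  exact Real.rpow_le_rpow_of_exponent_le (one_le_P k) hs
lemma wt_mono {a b : ℝ} (h : a ≤ b) (k : ℤ) : wt a k ≤ wt b k :=
  Real.rpow_le_rpow_of_exponent_le (one_le_P k) h
lemma wt_add (a b : ℝ) (k : ℤ) : wt (a+b) k = wt a k * wt b k := Real.rpow_add (P_pos k) a b
lemma wt_one (k : ℤ) : wt 1 k = 1 + (k:ℝ)^2 := Real.rpow_one _
lemma wt_neg_arg (s : ℝ) (k : ℤ) : wt s (-k) = wt s k := by simp [wt]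
lemma wt_sub_comm (s : ℝ) (k j : ℤ) : wt s (k - j) = wt s (j - k) := by
  rw [show k - j = -(j - k) by ring, wt_neg_arg]
lemma abs_le_wt_half (k : ℤ) : |(k:ℝ)| ≤ wt (1/2) k := by
  rw [wt, ← Real.sqrt_eq_rpow, ← Real.sqrt_sq_eq_abs]
  exact Real.sqrt_le_sqrt (by nlinarith)

lemma peetre {σ : ℝ} (hσ : 0 ≤ σ) (k j : ℤ) :
    wt σ k ≤ (2:ℝ)^σ * (wt σ j * wt σ (k - j)) := by
  have hb : (1:ℝ) + (k:ℝ)^2 ≤ 2 * ((1 + (j:ℝ)^2) * (1 + ((k - j : ℤ):ℝ)^2)) := by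
    push_cast
    nlinarith [sq_nonneg ((j:ℝ) - ((k:ℝ) - (j:ℝ))), sq_nonneg ((j:ℝ) * ((k:ℝ) - (j:ℝ)))]
  calc wt σ k ≤ (2 * ((1 + (j:ℝ)^2) * (1 + ((k - j : ℤ):ℝ)^2)))^σ :=
        Real.rpow_le_rpow (by positivity) hb hσ
    _ = (2:ℝ)^σ * (wt σ j * wt σ (k - j)) := by
        rw [Real.mul_rpow (by norm_num) (by positivity),
          Real.mul_rpow (by positivity) (by positivity)]
        rfl

/-- Weighted coefficient sequence. -/
def Xs (σ : ℝ) (c : FC) (k : ℤ) : ℝ := wt σ k * ‖c k‖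
lemma Xs_nonneg (σ : ℝ) (c : FC) (k : ℤ) : 0 ≤ Xs σ c k :=
  mul_nonneg (wt_nonneg _ _) (norm_nonneg _)
lemma Xs_sq (σ : ℝ) (c : FC) (k : ℤ) : Xs σ c k ^ 2 = wt (σ+σ) k * ‖c k‖^2 := by
  rw [Xs, mul_pow, wt_add, pow_two]

lemma hsNorm_nonneg (s : ℝ) (c : FC) : 0 ≤ hsNorm s c := Real.sqrt_nonneg _
lemma hsNorm_sq (s : ℝ) (c : FC) : hsNorm s c ^ 2 = ∑' k, wt s k * ‖c k‖^2 :=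
  Real.sq_sqrt (tsum_nonneg fun k => mul_nonneg (wt_nonneg _ _) (sq_nonneg _))
lemma sqrt_tsum_sq (σ : ℝ) (c : FC) :
    Real.sqrt (∑' k, Xs σ c k ^ 2) = hsNorm (σ+σ) c := by
  rw [hsNorm]
  congr 1
  exact tsum_congr fun k => Xs_sq σ c k

lemma summable_wt_of_le {a b : ℝ} (h : a ≤ b) {c : FC}
    (hc : Summable fun k => wt b k * ‖c k‖^2) :
    Summable fun k => wt a k * ‖c k‖^2 :=
  Summable.of_nonneg_of_le (fun k => mul_nonneg (wt_nonneg _ _) (sq_nonneg _))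
    (fun k => mul_le_mul_of_nonneg_right (wt_mono h k) (sq_nonneg _)) hc

lemma summable_Xs_sq {a : ℝ} {c : FC} (hc : Summable fun k => wt (a+a) k * ‖c k‖^2) :
    Summable fun k => Xs a c k ^ 2 :=
  hc.congr fun k => (Xs_sq a c k).symm

lemma hsNorm_mono {a b : ℝ} (h : a ≤ b) {c : FC}
    (hc : Summable fun k => wt b k * ‖c k‖^2) :
    hsNorm a c ≤ hsNorm b c :=
  Real.sqrt_le_sqrt (Summable.tsum_le_tsum
    (fun k => mul_le_mul_of_nonneg_right (wt_mono h k) (sq_nonneg _))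
    (summable_wt_of_le h hc) hc)

lemma tsum_cs {ι : Type*} (f g : ι → ℝ) (hf0 : ∀ i, 0 ≤ f i) (hg0 : ∀ i, 0 ≤ g i)
    (hf : Summable fun i => f i ^ 2) (hg : Summable fun i => g i ^ 2) :
    Summable (fun i => f i * g i) ∧
      ∑' i, f i * g i ≤ Real.sqrt (∑' i, f i ^ 2) * Real.sqrt (∑' i, g i ^ 2) := by
  have hsum : Summable (fun i => f i * g i) := by
    refine Summable.of_nonneg_of_le (fun i => mul_nonneg (hf0 i) (hg0 i))
      (fun i => ?_) ((hf.add hg).div_const 2)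
    nlinarith [sq_nonneg (f i - g i)]
  refine ⟨hsum, Summable.tsum_le_of_sum_le hsum fun u => ?_⟩
  calc ∑ i ∈ u, f i * g i
      ≤ Real.sqrt (∑ i ∈ u, f i^2) * Real.sqrt (∑ i ∈ u, g i^2) :=
        Real.sum_mul_le_sqrt_mul_sqrt u f g
    _ ≤ _ := by
        apply mul_le_mul
        · exact Real.sqrt_le_sqrt (Summable.sum_le_tsum u (fun i _ => sq_nonneg _) hf)
        · exact Real.sqrt_le_sqrt (Summable.sum_le_tsum u (fun i _ => sq_nonneg _) hg)
        · exact Real.sqrt_nonneg _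
        · exact Real.sqrt_nonneg _

/-- The shear equivalence `(k, j) ↦ (k - j, j)`. -/
def shear : ℤ × ℤ ≃ ℤ × ℤ where
  toFun p := (p.1 - p.2, p.2)
  invFun p := (p.1 + p.2, p.2)
  left_inv p := by simp
  right_inv p := by simp

lemma tsum_shear_mul {b x : ℤ → ℝ} (hb0 : ∀ i, 0 ≤ b i) (hx0 : ∀ i, 0 ≤ x i)
    (hb : Summable b) (hx : Summable x) :
    Summable (fun p : ℤ × ℤ => b (p.1 - p.2) * x p.2) ∧
      ∑' p : ℤ × ℤ, b (p.1 - p.2) * x p.2 = (∑' k, b k) * ∑' k, x k := by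
  have hF : Summable (fun p : ℤ × ℤ => b p.1 * x p.2) := hb.mul_of_nonneg hx hb0 hx0
  have h1 : Summable (fun p : ℤ × ℤ => b (p.1 - p.2) * x p.2) :=
    (shear.summable_iff (f := fun p : ℤ × ℤ => b p.1 * x p.2)).2 hF
  refine ⟨h1, ?_⟩
  have h2 : ∑' p : ℤ × ℤ, b (p.1 - p.2) * x p.2 = ∑' p : ℤ × ℤ, b p.1 * x p.2 :=
    shear.tsum_eq (fun p : ℤ × ℤ => b p.1 * x p.2)
  rw [h2, Summable.tsum_prod' hF (fun k => hF.prod_factor k)]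
  simp_rw [tsum_mul_left, tsum_mul_right]


/-- The shear equivalence `(k, j) ↦ (k - j, k)`. -/
def shear2 : ℤ × ℤ ≃ ℤ × ℤ where
  toFun p := (p.1 - p.2, p.1)
  invFun p := (p.2, p.2 - p.1)
  left_inv p := by simp
  right_inv p := by simp

lemma tsum_shear_mul2 {b y : ℤ → ℝ} (hb0 : ∀ i, 0 ≤ b i) (hy0 : ∀ i, 0 ≤ y i)
    (hb : Summable b) (hy : Summable y) :
    Summable (fun p : ℤ × ℤ => b (p.1 - p.2) * y p.1) ∧
      ∑' p : ℤ × ℤ, b (p.1 - p.2) * y p.1 = (∑' k, b k) * ∑' k, y k := by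
  have hF : Summable (fun p : ℤ × ℤ => b p.1 * y p.2) := hb.mul_of_nonneg hy hb0 hy0
  have h1 : Summable (fun p : ℤ × ℤ => b (p.1 - p.2) * y p.1) :=
    (shear2.summable_iff (f := fun p : ℤ × ℤ => b p.1 * y p.2)).2 hF
  refine ⟨h1, ?_⟩
  have h2 : ∑' p : ℤ × ℤ, b (p.1 - p.2) * y p.1 = ∑' p : ℤ × ℤ, b p.1 * y p.2 :=
    shear2.tsum_eq (fun p : ℤ × ℤ => b p.1 * y p.2)
  rw [h2, Summable.tsum_prod' hF (fun k => hF.prod_factor k)]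
  simp_rw [tsum_mul_left, tsum_mul_right]

lemma schur {b x y : ℤ → ℝ} (hb0 : ∀ i, 0 ≤ b i) (hx0 : ∀ i, 0 ≤ x i) (hy0 : ∀ i, 0 ≤ y i)
    (hb : Summable b) (hx : Summable fun i => x i ^ 2) (hy : Summable fun i => y i ^ 2) :
    Summable (fun p : ℤ × ℤ => b (p.1 - p.2) * x p.2 * y p.1) ∧
      ∑' p : ℤ × ℤ, b (p.1 - p.2) * x p.2 * y p.1
        ≤ (∑' k, b k) * (Real.sqrt (∑' k, x k ^ 2) * Real.sqrt (∑' k, y k ^ 2)) := by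
  set f : ℤ × ℤ → ℝ := fun p => Real.sqrt (b (p.1 - p.2)) * x p.2 with hf
  set g : ℤ × ℤ → ℝ := fun p => Real.sqrt (b (p.1 - p.2)) * y p.1 with hg
  have hfg : ∀ p : ℤ × ℤ, f p * g p = b (p.1 - p.2) * x p.2 * y p.1 := by
    intro p
    rw [hf, hg]
    simp only
    rw [show Real.sqrt (b (p.1-p.2)) * x p.2 * (Real.sqrt (b (p.1-p.2)) * y p.1)
        = (Real.sqrt (b (p.1-p.2)) * Real.sqrt (b (p.1-p.2))) * (x p.2 * y p.1) by ring,
      Real.mul_self_sqrt (hb0 _), mul_assoc]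
  have hf2 : ∀ p : ℤ × ℤ, f p ^ 2 = b (p.1 - p.2) * x p.2 ^ 2 := fun p => by
    rw [hf]; simp only; rw [mul_pow, Real.sq_sqrt (hb0 _)]
  have hg2 : ∀ p : ℤ × ℤ, g p ^ 2 = b (p.1 - p.2) * y p.1 ^ 2 := fun p => by
    rw [hg]; simp only; rw [mul_pow, Real.sq_sqrt (hb0 _)]
  obtain ⟨hs1, he1⟩ := tsum_shear_mul hb0 (fun i => sq_nonneg (x i)) hb hx
  obtain ⟨hs2, he2⟩ := tsum_shear_mul2 hb0 (fun i => sq_nonneg (y i)) hb hy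
  have hsf2 : Summable (fun p : ℤ × ℤ => f p ^ 2) := hs1.congr fun p => (hf2 p).symm
  have hsg2 : Summable (fun p : ℤ × ℤ => g p ^ 2) := hs2.congr fun p => (hg2 p).symm
  obtain ⟨hcs, hcsle⟩ := tsum_cs f g
    (fun p => mul_nonneg (Real.sqrt_nonneg _) (hx0 _))
    (fun p => mul_nonneg (Real.sqrt_nonneg _) (hy0 _)) hsf2 hsg2
  have hB : 0 ≤ ∑' k, b k := tsum_nonneg hb0
  refine ⟨hcs.congr hfg, ?_⟩
  have e1 : ∑' p : ℤ × ℤ, f p ^ 2 = (∑' k, b k) * ∑' k, x k ^ 2 := by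
    rw [tsum_congr hf2]; exact he1
  have e2 : ∑' p : ℤ × ℤ, g p ^ 2 = (∑' k, b k) * ∑' k, y k ^ 2 := by
    rw [tsum_congr hg2]; exact he2
  calc ∑' p : ℤ × ℤ, b (p.1 - p.2) * x p.2 * y p.1
      = ∑' p : ℤ × ℤ, f p * g p := (tsum_congr hfg).symm
    _ ≤ Real.sqrt (∑' p, f p ^ 2) * Real.sqrt (∑' p, g p ^ 2) := hcsle
    _ = (∑' k, b k) * (Real.sqrt (∑' k, x k ^ 2) * Real.sqrt (∑' k, y k ^ 2)) := by
        rw [e1, e2, Real.sqrt_mul hB, Real.sqrt_mul hB,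
          show Real.sqrt (∑' k, b k) * Real.sqrt (∑' k, x k ^ 2)
              * (Real.sqrt (∑' k, b k) * Real.sqrt (∑' k, y k ^ 2))
            = (Real.sqrt (∑' k, b k) * Real.sqrt (∑' k, b k))
              * (Real.sqrt (∑' k, x k ^ 2) * Real.sqrt (∑' k, y k ^ 2)) by ring,
          Real.mul_self_sqrt hB]

lemma summable_invP : Summable (fun k : ℤ => ((1:ℝ) + (k:ℝ)^2)⁻¹) := by
  have hnat : Summable (fun n : ℕ => ((1:ℝ) + (n:ℝ)^2)⁻¹) := by
    have h1 : Summable (fun n : ℕ => 1 / ((n:ℝ)+1) ^ 2) := by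
      have h2 := (summable_nat_add_iff (f := fun n : ℕ => 1 / (n:ℝ) ^ 2) 1).2
        (summable_one_div_nat_pow.2 one_lt_two)
      exact h2.congr fun n => by push_cast; ring_nf
    refine Summable.of_nonneg_of_le (fun n => by positivity) (fun n => ?_) (h1.mul_left 2)
    rw [inv_eq_one_div, mul_one_div, div_le_div_iff₀ (by positivity) (by positivity)]
    nlinarith [sq_nonneg ((n:ℝ) - 1)]
  exact Summable.of_nat_of_neg hnat (hnat.congr fun n => by push_cast; ring_nf)

/-- The constant `C₀ = (Σ (1+k²)⁻¹)^{1/2}`. -/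
def C0 : ℝ := Real.sqrt (∑' k : ℤ, ((1:ℝ) + (k:ℝ)^2)⁻¹)

lemma C0_nonneg : 0 ≤ C0 := Real.sqrt_nonneg _

/-- Weighted ℓ¹ bound via Cauchy-Schwarz. -/
lemma l1_bound (τ : ℝ) (c : FC) (hc : Summable fun k => wt (τ+τ+1) k * ‖c k‖^2) :
    Summable (Xs τ c) ∧ ∑' k, Xs τ c k ≤ C0 * hsNorm (τ+τ+1) c := by
  set f : ℤ → ℝ := fun k => wt (-(1/2)) k with hfdef
  set g : ℤ → ℝ := fun k => wt (τ+1/2) k * ‖c k‖ with hgdef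
  have hfg : ∀ k, f k * g k = Xs τ c k := by
    intro k
    rw [hfdef, hgdef]
    simp only
    rw [← mul_assoc, ← wt_add, Xs]
    norm_num
  have hf2 : ∀ k, f k ^ 2 = ((1:ℝ) + (k:ℝ)^2)⁻¹ := by
    intro k
    rw [hfdef]
    simp only
    rw [pow_two, ← wt_add]
    norm_num
    rw [wt, Real.rpow_neg_one]
  have hg2 : ∀ k, g k ^ 2 = wt (τ+τ+1) k * ‖c k‖^2 := by
    intro k
    rw [hgdef]
    simp only
    rw [mul_pow, pow_two (wt _ k), ← wt_add]
    ring_nf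
  have hsf : Summable fun k => f k ^ 2 := summable_invP.congr fun k => (hf2 k).symm
  have hsg : Summable fun k => g k ^ 2 := hc.congr fun k => (hg2 k).symm
  obtain ⟨hs, hle⟩ := tsum_cs f g (fun k => wt_nonneg _ _)
    (fun k => mul_nonneg (wt_nonneg _ _) (norm_nonneg _)) hsf hsg
  constructor
  · exact hs.congr hfg
  · calc ∑' k, Xs τ c k = ∑' k, f k * g k := (tsum_congr hfg).symm
      _ ≤ Real.sqrt (∑' k, f k ^ 2) * Real.sqrt (∑' k, g k ^ 2) := hle
      _ = C0 * hsNorm (τ+τ+1) c := by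
          rw [tsum_congr hf2, tsum_congr hg2]
          rfl

lemma norm_D1 (c : FC) (k : ℤ) : ‖FC.D1 c k‖ = |(k:ℝ)| * ‖c k‖ := by
  simp [FC.D1]

lemma conv_summand_summable {c d : FC} (hc : Summable fun k => ‖c k‖^2)
    (hd : Summable fun k => ‖d k‖^2) (k : ℤ) :
    Summable fun j => c j * d (k - j) := by
  apply Summable.of_norm
  have h : Summable fun j => ‖d (k - j)‖^2 :=
    ((Equiv.subLeft k).summable_iff (f := fun m => ‖d m‖^2)).2 hd
  refine Summable.of_nonneg_of_le (fun j => norm_nonneg _) (fun j => ?_)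
    ((hc.add h).div_const 2)
  rw [norm_mul]
  nlinarith [sq_nonneg (‖c j‖ - ‖d (k - j)‖), norm_nonneg (c j), norm_nonneg (d (k - j))]

lemma summable_norm_sq_of_wt {σ : ℝ} (hσ : 0 ≤ σ) {c : FC}
    (hc : Summable fun k => wt σ k * ‖c k‖^2) : Summable fun k => ‖c k‖^2 :=
  Summable.of_nonneg_of_le (fun k => sq_nonneg _)
    (fun k => le_mul_of_one_le_left (sq_nonneg _) (one_le_wt hσ k)) hc

lemma summable_D1_sq {σ : ℝ} (hσ : 1 ≤ σ) {c : FC}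
    (hc : Summable fun k => wt σ k * ‖c k‖^2) : Summable fun k => ‖FC.D1 c k‖^2 := by
  refine Summable.of_nonneg_of_le (fun k => sq_nonneg _) (fun k => ?_) hc
  rw [norm_D1, mul_pow, sq_abs]
  refine mul_le_mul_of_nonneg_right ?_ (sq_nonneg _)
  calc ((k:ℝ))^2 ≤ 1 + (k:ℝ)^2 := by linarith
    _ = wt 1 k := (wt_one k).symm
    _ ≤ wt σ k := wt_mono hσ k

lemma rpow_diff {t a b : ℝ} (ht : 1 ≤ t) (hb : 1 ≤ b) (hab : b ≤ a) :
    a ^ t - b ^ t ≤ t * (a - b) * a ^ (t - 1) := by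
  have ha : (0:ℝ) < a := by linarith
  have hx : (-1:ℝ) ≤ (b - a)/a := by
    rw [le_div_iff₀ ha]
    nlinarith
  have hber := one_add_mul_self_le_rpow_one_add hx ht
  have h2 : (1 + (b - a)/a) = b/a := by field_simp; ring
  rw [h2, Real.div_rpow (by linarith) ha.le] at hber
  have h3 : a^t * (1 + t*((b - a)/a)) ≤ b^t := by
    calc a^t * (1 + t*((b - a)/a)) ≤ a^t * (b^t/a^t) :=
          mul_le_mul_of_nonneg_left hber (Real.rpow_pos_of_pos ha t).le
      _ = b^t := by field_simp
  have h4 : a^t * (1 + t*((b - a)/a)) = a^t + t*(b - a)*a^(t - 1) := by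
    rw [Real.rpow_sub ha, Real.rpow_one]
    field_simp
  nlinarith [h3, h4]

lemma key_ineq_aux {t : ℝ} (ht : 1 ≤ t) {k j : ℤ} (hjk : 1 + (j:ℝ)^2 ≤ 1 + (k:ℝ)^2) :
    |(j:ℝ) * wt t k - (k:ℝ) * wt t j| ≤
      (2*t+1) * ((2:ℝ)^(t/2) * (wt ((t+1)/2) (k - j) * (wt (t/2) j * wt (t/2) k))) := by
  have ht0 : (0:ℝ) ≤ t := by linarith
  have hj2 : (j:ℝ)^2 ≤ (k:ℝ)^2 := by linarith
  have hmono : wt t j ≤ wt t k := Real.rpow_le_rpow (by positivity) hjk ht0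
  have hd : wt t k - wt t j ≤ t * ((k:ℝ)^2 - (j:ℝ)^2) * wt (t-1) k := by
    have := rpow_diff ht (one_le_P j) hjk
    calc wt t k - wt t j ≤ t * ((1+(k:ℝ)^2) - (1+(j:ℝ)^2)) * (1+(k:ℝ)^2)^(t-1) := this
      _ = t * ((k:ℝ)^2 - (j:ℝ)^2) * wt (t-1) k := by rw [wt]; ring_nf
  -- |j| * (wt t k - wt t j) ≤ 2t|k−j| wt t k
  have habsj : |(j:ℝ)| ≤ |(k:ℝ)| := by
    rw [← Real.sqrt_sq_eq_abs, ← Real.sqrt_sq_eq_abs]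
    exact Real.sqrt_le_sqrt hj2
  have hstep2 : |(j:ℝ)| * (wt t k - wt t j) ≤ 2 * t * |(k:ℝ) - (j:ℝ)| * wt t k := by
    have h5 : |(j:ℝ)| * (((k:ℝ)^2 - (j:ℝ)^2)) ≤ |(k:ℝ)-(j:ℝ)| * (2 * (1+(k:ℝ)^2)) := by
      have : (k:ℝ)^2 - (j:ℝ)^2 = |(k:ℝ)^2 - (j:ℝ)^2| := (abs_of_nonneg (by linarith)).symm
      rw [this, show (k:ℝ)^2 - (j:ℝ)^2 = ((k:ℝ)-(j:ℝ))*((k:ℝ)+(j:ℝ)) by ring, abs_mul,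
        ← mul_assoc]
      rw [show |(j:ℝ)| * |(k:ℝ)-(j:ℝ)| * |(k:ℝ)+(j:ℝ)| = |(k:ℝ)-(j:ℝ)| * (|(j:ℝ)| * |(k:ℝ)+(j:ℝ)|) by ring]
      refine mul_le_mul_of_nonneg_left ?_ (abs_nonneg _)
      calc |(j:ℝ)| * |(k:ℝ)+(j:ℝ)| ≤ |(k:ℝ)| * (|(k:ℝ)| + |(j:ℝ)|) := by
            exact mul_le_mul habsj (abs_add_le _ _) (abs_nonneg _) (abs_nonneg _)
        _ ≤ 2 * (1+(k:ℝ)^2) := by nlinarith [sq_abs (k:ℝ), sq_abs (j:ℝ), abs_nonneg (k:ℝ), abs_nonneg (j:ℝ)]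
    calc |(j:ℝ)| * (wt t k - wt t j) ≤ t * (|(j:ℝ)| * ((k:ℝ)^2 - (j:ℝ)^2)) * wt (t-1) k := by
          nlinarith [wt_nonneg (t-1) k, abs_nonneg (j:ℝ), hd, mul_le_mul_of_nonneg_left hd (abs_nonneg (j:ℝ))]
      _ ≤ t * (|(k:ℝ)-(j:ℝ)| * (2 * (1+(k:ℝ)^2))) * wt (t-1) k := by
          refine mul_le_mul_of_nonneg_right (mul_le_mul_of_nonneg_left h5 ht0) (wt_nonneg _ _)
      _ = 2 * t * |(k:ℝ) - (j:ℝ)| * ((1+(k:ℝ)^2) * wt (t-1) k) := by ring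
      _ = 2 * t * |(k:ℝ) - (j:ℝ)| * wt t k := by
          rw [← wt_one k, ← wt_add, show (1:ℝ) + (t-1) = t by ring]
  have hstep3 : |(j:ℝ) * wt t k - (k:ℝ) * wt t j| ≤ (2*t+1) * (|(k:ℝ)-(j:ℝ)| * wt t k) := by
    have hid : (j:ℝ) * wt t k - (k:ℝ) * wt t j
        = (j:ℝ) * (wt t k - wt t j) + ((j:ℝ) - (k:ℝ)) * wt t j := by ring
    calc |(j:ℝ) * wt t k - (k:ℝ) * wt t j|
        ≤ |(j:ℝ) * (wt t k - wt t j)| + |((j:ℝ) - (k:ℝ)) * wt t j| := by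
          rw [hid]; exact abs_add_le _ _
      _ = |(j:ℝ)| * (wt t k - wt t j) + |(k:ℝ) - (j:ℝ)| * wt t j := by
          rw [abs_mul, abs_mul, abs_of_nonneg (by linarith : (0:ℝ) ≤ wt t k - wt t j),
            abs_of_nonneg (wt_nonneg t j), abs_sub_comm]
      _ ≤ 2 * t * |(k:ℝ)-(j:ℝ)| * wt t k + |(k:ℝ)-(j:ℝ)| * wt t k :=
          add_le_add hstep2 (mul_le_mul_of_nonneg_left hmono (abs_nonneg _))
      _ = (2*t+1) * (|(k:ℝ)-(j:ℝ)| * wt t k) := by ring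
  have hpeet : wt t k ≤ (2:ℝ)^(t/2) * (wt (t/2) j * wt (t/2) (k - j)) * wt (t/2) k := by
    have h6 : wt t k = wt (t/2) k * wt (t/2) k := by
      rw [← wt_add]; congr 1; ring
    rw [h6]
    exact mul_le_mul_of_nonneg_right (peetre (by linarith) k j) (wt_nonneg _ _)
  have habsk : |(k:ℝ) - (j:ℝ)| ≤ wt (1/2) (k - j) := by
    have h7 := abs_le_wt_half (k - j)
    rwa [Int.cast_sub] at h7
  calc |(j:ℝ) * wt t k - (k:ℝ) * wt t j| ≤ (2*t+1) * (|(k:ℝ)-(j:ℝ)| * wt t k) := hstep3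
    _ ≤ (2*t+1) * (wt (1/2) (k-j) * ((2:ℝ)^(t/2) * (wt (t/2) j * wt (t/2) (k - j)) * wt (t/2) k)) := by
        refine mul_le_mul_of_nonneg_left ?_ (by linarith)
        exact mul_le_mul habsk hpeet (wt_nonneg _ _) (wt_nonneg _ _)
    _ = (2*t+1) * ((2:ℝ)^(t/2) * ((wt (1/2) (k-j) * wt (t/2) (k-j)) * (wt (t/2) j * wt (t/2) k))) := by
        ring
    _ = (2*t+1) * ((2:ℝ)^(t/2) * (wt ((t+1)/2) (k - j) * (wt (t/2) j * wt (t/2) k))) := by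
        rw [← wt_add (1/2) (t/2) (k - j), show (1/2 + t/2 : ℝ) = (t+1)/2 by ring]

lemma key_ineq {t : ℝ} (ht : 1 ≤ t) (k j : ℤ) :
    |(j:ℝ) * wt t k - (k:ℝ) * wt t j| ≤
      (2*t+1) * ((2:ℝ)^(t/2) * (wt ((t+1)/2) (k - j) * (wt (t/2) j * wt (t/2) k))) := by
  rcases le_total (1 + (j:ℝ)^2) (1 + (k:ℝ)^2) with h | h
  · exact key_ineq_aux ht h
  · have h2 := key_ineq_aux ht (k := j) (j := k) h
    rw [wt_sub_comm ((t+1)/2) j k] at h2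
    calc |(j:ℝ) * wt t k - (k:ℝ) * wt t j|
        = |(k:ℝ) * wt t j - (j:ℝ) * wt t k| := abs_sub_comm _ _
      _ ≤ (2*t+1) * ((2:ℝ)^(t/2) * (wt ((t+1)/2) (k - j) * (wt (t/2) k * wt (t/2) j))) := h2
      _ = _ := by ring

lemma lemB (t : ℝ) (ht : 1 ≤ t) (c η w : FC)
    (hc : Summable fun k => wt t k * ‖c k‖^2)
    (hη : Summable fun k => wt (t+2) k * ‖η k‖^2)
    (hw : Summable fun k => wt t k * ‖w k‖^2) :
    Summable (fun k => (wt t k : ℂ) * (FC.mul c (FC.D1 η) k * (starRingEnd ℂ) (w k))) ∧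
      |(∑' k, (wt t k : ℂ) * (FC.mul c (FC.D1 η) k * (starRingEnd ℂ) (w k))).re|
        ≤ (2:ℝ)^(t/2) * (C0 * hsNorm (t+2) η * (hsNorm t c * hsNorm t w)) := by
  have ht0 : (0:ℝ) ≤ t := by linarith
  set b : ℤ → ℝ := Xs ((t+1)/2) η with hbdef
  set x : ℤ → ℝ := Xs (t/2) c with hxdef
  set y : ℤ → ℝ := Xs (t/2) w with hydef
  have hb0 : ∀ i, 0 ≤ b i := fun i => Xs_nonneg _ _ i
  have hx0 : ∀ i, 0 ≤ x i := fun i => Xs_nonneg _ _ i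
  have hy0 : ∀ i, 0 ≤ y i := fun i => Xs_nonneg _ _ i
  have hexp : (t+1)/2 + ((t+1)/2 + 1) = t + 2 := by ring
  obtain ⟨hbsum, hble⟩ := l1_bound ((t+1)/2) η (by
    rw [show ((t+1)/2 + (t+1)/2 + 1 : ℝ) = t + 2 by ring]; exact hη)
  rw [show ((t+1)/2 + (t+1)/2 + 1 : ℝ) = t + 2 by ring] at hble
  have hxsum : Summable fun k => x k ^ 2 := summable_Xs_sq (by
    rw [show (t/2 + t/2 : ℝ) = t by ring]; exact hc)
  have hysum : Summable fun k => y k ^ 2 := summable_Xs_sq (by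
    rw [show (t/2 + t/2 : ℝ) = t by ring]; exact hw)
  obtain ⟨hGsum, hGle⟩ := schur hb0 hx0 hy0 hbsum hxsum hysum
  set K : ℝ := (2:ℝ)^(t/2) with hKdef
  have hK0 : (0:ℝ) ≤ K := (Real.rpow_pos_of_pos (by norm_num) _).le
  set F : ℤ × ℤ → ℂ := fun p =>
    (wt t p.1 : ℂ) * (c p.2 * FC.D1 η (p.1 - p.2) * (starRingEnd ℂ) (w p.1)) with hFdef
  have hFle : ∀ p : ℤ × ℤ, ‖F p‖ ≤ K * (b (p.1 - p.2) * x p.2 * y p.1) := by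
    rintro ⟨k, j⟩
    have e1 : ‖F (k, j)‖ = wt t k * (‖c j‖ * (|((k - j : ℤ):ℝ)| * ‖η (k - j)‖) * ‖w k‖) := by
      rw [hFdef]
      simp only [norm_mul, RCLike.norm_conj, Complex.norm_real, Real.norm_eq_abs,
        abs_of_nonneg (wt_nonneg t k), norm_D1]
    have hw1 : wt t k ≤ K * (wt (t/2) j * wt (t/2) (k - j)) * wt (t/2) k := by
      rw [show wt t k = wt (t/2) k * wt (t/2) k by
        rw [← wt_add]; congr 1; ring]
      exact mul_le_mul_of_nonneg_right (peetre (by linarith) k j) (wt_nonneg _ _)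
    have hm : |((k - j : ℤ):ℝ)| ≤ wt (1/2) (k - j) := abs_le_wt_half _
    rw [e1]
    calc wt t k * (‖c j‖ * (|((k - j : ℤ):ℝ)| * ‖η (k - j)‖) * ‖w k‖)
        ≤ (K * (wt (t/2) j * wt (t/2) (k - j)) * wt (t/2) k)
            * (‖c j‖ * (wt (1/2) (k - j) * ‖η (k - j)‖) * ‖w k‖) := by
          refine mul_le_mul hw1 ?_ ?_ ?_
          · exact mul_le_mul_of_nonneg_right (mul_le_mul_of_nonneg_left
              (mul_le_mul_of_nonneg_right hm (norm_nonneg _)) (norm_nonneg _)) (norm_nonneg _)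
          · exact mul_nonneg (mul_nonneg (norm_nonneg _)
              (mul_nonneg (abs_nonneg _) (norm_nonneg _))) (norm_nonneg _)
          · exact mul_nonneg (mul_nonneg hK0
              (mul_nonneg (wt_nonneg _ _) (wt_nonneg _ _))) (wt_nonneg _ _)
      _ = K * (((wt (1/2) (k - j) * wt (t/2) (k - j)) * ‖η (k - j)‖)
            * (wt (t/2) j * ‖c j‖) * (wt (t/2) k * ‖w k‖)) := by ring
      _ = K * (b (k - j) * x j * y k) := by
          rw [hbdef, hxdef, hydef]
          simp only [Xs]
          rw [← wt_add (1/2) (t/2) (k - j), show (1/2 + t/2 : ℝ) = (t+1)/2 by ring]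
  set G : ℤ × ℤ → ℝ := fun p => K * (b (p.1 - p.2) * x p.2 * y p.1) with hGdef
  have hGsum' : Summable G := hGsum.mul_left K
  have hFsum : Summable F := Summable.of_norm_bounded hGsum' hFle
  have hrownorm : ∀ k, Summable fun j => ‖F (k, j)‖ := by
    intro k
    exact Summable.of_nonneg_of_le (fun j => norm_nonneg _) (fun j => hFle (k, j))
      (hGsum'.prod_factor k)
  have hterm : ∀ k, (wt t k : ℂ) * (FC.mul c (FC.D1 η) k * (starRingEnd ℂ) (w k))
      = ∑' j, F (k, j) := by
    intro k
    rw [FC.mul, ← tsum_mul_right, ← tsum_mul_left]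
  set gk : ℤ → ℝ := fun k => ∑' j, G (k, j) with hgkdef
  have hG0 : ∀ p : ℤ × ℤ, 0 ≤ G p := fun p => mul_nonneg hK0
    (mul_nonneg (mul_nonneg (hb0 _) (hx0 _)) (hy0 _))
  have hgksum : Summable gk := ((summable_prod_of_nonneg hG0).1 hGsum').2
  have hbound : ∀ k, ‖(wt t k : ℂ) * (FC.mul c (FC.D1 η) k * (starRingEnd ℂ) (w k))‖ ≤ gk k := by
    intro k
    rw [hterm k]
    calc ‖∑' j, F (k, j)‖ ≤ ∑' j, ‖F (k, j)‖ := norm_tsum_le_tsum_norm (hrownorm k)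
      _ ≤ gk k := Summable.tsum_le_tsum (fun j => hFle (k, j)) (hrownorm k) (hGsum'.prod_factor k)
  have hseq : Summable (fun k => (wt t k : ℂ) * (FC.mul c (FC.D1 η) k * (starRingEnd ℂ) (w k))) :=
    Summable.of_norm_bounded hgksum hbound
  refine ⟨hseq, ?_⟩
  have hsn : Summable (fun k => ‖(wt t k : ℂ) * (FC.mul c (FC.D1 η) k * (starRingEnd ℂ) (w k))‖) :=
    Summable.of_nonneg_of_le (fun k => norm_nonneg _) hbound hgksum
  calc |(∑' k, (wt t k : ℂ) * (FC.mul c (FC.D1 η) k * (starRingEnd ℂ) (w k))).re|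
      ≤ ‖∑' k, (wt t k : ℂ) * (FC.mul c (FC.D1 η) k * (starRingEnd ℂ) (w k))‖ := by
        exact Complex.abs_re_le_norm _
    _ ≤ ∑' k, ‖(wt t k : ℂ) * (FC.mul c (FC.D1 η) k * (starRingEnd ℂ) (w k))‖ :=
        norm_tsum_le_tsum_norm hsn
    _ ≤ ∑' k, gk k := Summable.tsum_le_tsum hbound hsn hgksum
    _ = ∑' p : ℤ × ℤ, G p := (Summable.tsum_prod' hGsum' (fun k => hGsum'.prod_factor k)).symm
    _ = K * ∑' p : ℤ × ℤ, b (p.1 - p.2) * x p.2 * y p.1 := by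
        rw [hGdef]; exact tsum_mul_left
    _ ≤ K * ((∑' k, b k) * (Real.sqrt (∑' k, x k ^ 2) * Real.sqrt (∑' k, y k ^ 2))) :=
        mul_le_mul_of_nonneg_left hGle hK0
    _ ≤ K * (C0 * hsNorm (t+2) η * (hsNorm t c * hsNorm t w)) := by
        rw [hxdef, hydef, sqrt_tsum_sq, sqrt_tsum_sq,
          show (t/2 + t/2 : ℝ) = t by ring]
        refine mul_le_mul_of_nonneg_left ?_ hK0
        exact mul_le_mul_of_nonneg_right hble
          (mul_nonneg (hsNorm_nonneg _ _) (hsNorm_nonneg _ _))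

lemma lemA (t : ℝ) (ht : 1 ≤ t) (v w : FC) (hrv : FC.isReal v)
    (hv : Summable fun k => wt (t+2) k * ‖v k‖^2)
    (hw2 : Summable fun k => wt (t+2) k * ‖w k‖^2) :
    Summable (fun k => (wt t k : ℂ) * (FC.mul v (FC.D1 w) k * (starRingEnd ℂ) (w k))) ∧
      |(∑' k, (wt t k : ℂ) * (FC.mul v (FC.D1 w) k * (starRingEnd ℂ) (w k))).re|
        ≤ (2*t+1) * (2:ℝ)^(t/2) * (C0 * hsNorm (t+2) v * hsNorm t w ^ 2) / 2 := by
  have ht0 : (0:ℝ) ≤ t := by linarith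
  set K : ℝ := (2:ℝ)^(t/2) with hKdef
  have hK0 : (0:ℝ) ≤ K := (Real.rpow_pos_of_pos (by norm_num) _).le
  set b1 : ℤ → ℝ := Xs (t/2) v with hb1def
  set b2 : ℤ → ℝ := Xs ((t+1)/2) v with hb2def
  set x1 : ℤ → ℝ := Xs ((t+1)/2) w with hx1def
  set y : ℤ → ℝ := Xs (t/2) w with hydef
  have hb10 : ∀ i, 0 ≤ b1 i := fun i => Xs_nonneg _ _ i
  have hb20 : ∀ i, 0 ≤ b2 i := fun i => Xs_nonneg _ _ i
  have hx10 : ∀ i, 0 ≤ x1 i := fun i => Xs_nonneg _ _ i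
  have hy0 : ∀ i, 0 ≤ y i := fun i => Xs_nonneg _ _ i
  obtain ⟨hb1sum, _⟩ := l1_bound (t/2) v (by
    rw [show (t/2 + t/2 + 1 : ℝ) = t + 1 by ring]
    exact summable_wt_of_le (by linarith) hv)
  obtain ⟨hb2sum, hb2le⟩ := l1_bound ((t+1)/2) v (by
    rw [show ((t+1)/2 + (t+1)/2 + 1 : ℝ) = t + 2 by ring]; exact hv)
  rw [show ((t+1)/2 + (t+1)/2 + 1 : ℝ) = t + 2 by ring] at hb2le
  have hx1sum : Summable fun k => x1 k ^ 2 := summable_Xs_sq (by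
    rw [show ((t+1)/2 + (t+1)/2 : ℝ) = t + 1 by ring]
    exact summable_wt_of_le (by linarith) hw2)
  have hysum : Summable fun k => y k ^ 2 := summable_Xs_sq (by
    rw [show (t/2 + t/2 : ℝ) = t by ring]
    exact summable_wt_of_le (by linarith) hw2)
  obtain ⟨hG1sum, _⟩ := schur hb10 hx10 hy0 hb1sum hx1sum hysum
  obtain ⟨hG2sum, hG2le⟩ := schur hb20 hy0 hy0 hb2sum hysum hysum
  set F : ℤ × ℤ → ℂ := fun p =>
    (wt t p.1 : ℂ) * (v (p.1 - p.2) * FC.D1 w p.2 * (starRingEnd ℂ) (w p.1)) with hFdef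
  have hFle : ∀ p : ℤ × ℤ, ‖F p‖ ≤ K * (b1 (p.1 - p.2) * x1 p.2 * y p.1) := by
    rintro ⟨k, j⟩
    have e1 : ‖F (k, j)‖ = wt t k * (‖v (k - j)‖ * (|(j:ℝ)| * ‖w j‖) * ‖w k‖) := by
      rw [hFdef]
      simp only [norm_mul, RCLike.norm_conj, Complex.norm_real, Real.norm_eq_abs,
        abs_of_nonneg (wt_nonneg t k), norm_D1]
    have hw1 : wt t k ≤ K * (wt (t/2) j * wt (t/2) (k - j)) * wt (t/2) k := by
      rw [show wt t k = wt (t/2) k * wt (t/2) k by rw [← wt_add]; congr 1; ring]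
      exact mul_le_mul_of_nonneg_right (peetre (by linarith) k j) (wt_nonneg _ _)
    have hm : |(j:ℝ)| ≤ wt (1/2) j := abs_le_wt_half _
    rw [e1]
    calc wt t k * (‖v (k - j)‖ * (|(j:ℝ)| * ‖w j‖) * ‖w k‖)
        ≤ (K * (wt (t/2) j * wt (t/2) (k - j)) * wt (t/2) k)
            * (‖v (k - j)‖ * (wt (1/2) j * ‖w j‖) * ‖w k‖) := by
          refine mul_le_mul hw1 ?_ ?_ ?_
          · exact mul_le_mul_of_nonneg_right (mul_le_mul_of_nonneg_left
              (mul_le_mul_of_nonneg_right hm (norm_nonneg _)) (norm_nonneg _)) (norm_nonneg _)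
          · exact mul_nonneg (mul_nonneg (norm_nonneg _)
              (mul_nonneg (abs_nonneg _) (norm_nonneg _))) (norm_nonneg _)
          · exact mul_nonneg (mul_nonneg hK0
              (mul_nonneg (wt_nonneg _ _) (wt_nonneg _ _))) (wt_nonneg _ _)
      _ = K * ((wt (t/2) (k - j) * ‖v (k - j)‖)
            * ((wt (1/2) j * wt (t/2) j) * ‖w j‖) * (wt (t/2) k * ‖w k‖)) := by ring
      _ = K * (b1 (k - j) * x1 j * y k) := by
          rw [hb1def, hx1def, hydef]
          simp only [Xs]
          rw [← wt_add (1/2) (t/2) j, show (1/2 + t/2 : ℝ) = (t+1)/2 by ring]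
  set G1 : ℤ × ℤ → ℝ := fun p => K * (b1 (p.1 - p.2) * x1 p.2 * y p.1) with hG1def
  have hG1sum' : Summable G1 := hG1sum.mul_left K
  have hFsum : Summable F := Summable.of_norm_bounded hG1sum' hFle
  have hrownorm : ∀ k, Summable fun j => ‖F (k, j)‖ := fun k =>
    Summable.of_nonneg_of_le (fun j => norm_nonneg _) (fun j => hFle (k, j))
      (hG1sum'.prod_factor k)
  have hterm : ∀ k, (wt t k : ℂ) * (FC.mul v (FC.D1 w) k * (starRingEnd ℂ) (w k))
      = ∑' j, F (k, j) := by
    intro k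
    have h0 : FC.mul v (FC.D1 w) k = ∑' j, v (k - j) * FC.D1 w j := by
      rw [FC.mul, ← Equiv.tsum_eq (Equiv.subLeft k) (fun j => v j * FC.D1 w (k - j))]
      exact tsum_congr fun j => by
        simp [Equiv.subLeft_apply, sub_sub_cancel]
    rw [h0, ← tsum_mul_right, ← tsum_mul_left]
  set G0 : ℤ × ℤ → ℝ := fun p => ‖F p‖ with hG0def
  set gk : ℤ → ℝ := fun k => ∑' j, G1 (k, j) with hgkdef
  have hG10 : ∀ p : ℤ × ℤ, 0 ≤ G1 p := fun p => mul_nonneg hK0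
    (mul_nonneg (mul_nonneg (hb10 _) (hx10 _)) (hy0 _))
  have hgksum : Summable gk := ((summable_prod_of_nonneg hG10).1 hG1sum').2
  have hbound : ∀ k, ‖(wt t k : ℂ) * (FC.mul v (FC.D1 w) k * (starRingEnd ℂ) (w k))‖ ≤ gk k := by
    intro k
    rw [hterm k]
    calc ‖∑' j, F (k, j)‖ ≤ ∑' j, ‖F (k, j)‖ := norm_tsum_le_tsum_norm (hrownorm k)
      _ ≤ gk k := Summable.tsum_le_tsum (fun j => hFle (k, j)) (hrownorm k) (hG1sum'.prod_factor k)
  have hseq : Summable (fun k => (wt t k : ℂ) * (FC.mul v (FC.D1 w) k * (starRingEnd ℂ) (w k))) :=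
    Summable.of_norm_bounded hgksum hbound
  refine ⟨hseq, ?_⟩
  -- the double sum
  set S : ℂ := ∑' p : ℤ × ℤ, F p with hSdef
  have hS : (∑' k, (wt t k : ℂ) * (FC.mul v (FC.D1 w) k * (starRingEnd ℂ) (w k))) = S := by
    rw [tsum_congr hterm, hSdef, Summable.tsum_prod' hFsum (fun k => hFsum.prod_factor k)]
  -- conjugate-swap
  set F' : ℤ × ℤ → ℂ := fun p => (starRingEnd ℂ) (F (p.2, p.1)) with hF'def
  have hswap : Summable (fun p : ℤ × ℤ => F (p.2, p.1)) :=
    (Equiv.prodComm ℤ ℤ).summable_iff.2 hFsum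
  have hF'sum : Summable F' := by
    have := hswap.star
    exact this.congr fun p => rfl
  have hconjS : (starRingEnd ℂ) S = ∑' p, F' p := by
    rw [starRingEnd_apply, hSdef, tsum_star]
    rw [← Equiv.tsum_eq (Equiv.prodComm ℤ ℤ) (fun p => star (F p))]
    exact tsum_congr fun p => rfl
  set H : ℤ × ℤ → ℂ := fun p => v (p.1 - p.2) * w p.2 * (starRingEnd ℂ) (w p.1)
      * (Complex.I * ((p.2:ℂ) * (wt t p.1 : ℂ) - (p.1:ℂ) * (wt t p.2 : ℂ))) with hHdef
  have hFF' : ∀ p : ℤ × ℤ, F p + F' p = H p := by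
    rintro ⟨k, j⟩
    have hv' : (starRingEnd ℂ) (v (j - k)) = v (k - j) := by
      have h1 := hrv (k - j)
      rw [show -(k - j) = j - k by ring] at h1
      rw [h1]
      exact Complex.conj_conj _
    rw [hF'def, hFdef, hHdef]
    simp only [FC.D1, map_mul, Complex.conj_conj, Complex.conj_I, map_intCast,
      Complex.conj_ofReal, hv']
    ring
  have hHsum : Summable H := (hFsum.add hF'sum).congr hFF'
  have hHle : ∀ p : ℤ × ℤ, ‖H p‖ ≤ ((2*t+1) * K) * (b2 (p.1 - p.2) * y p.2 * y p.1) := by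
    rintro ⟨k, j⟩
    have e3 : ((j:ℂ) * (wt t k : ℂ) - (k:ℂ) * (wt t j : ℂ))
        = (((j:ℝ) * wt t k - (k:ℝ) * wt t j : ℝ) : ℂ) := by push_cast; ring
    have e4 : ‖H (k, j)‖ = ‖v (k - j)‖ * ‖w j‖ * ‖w k‖
        * |(j:ℝ) * wt t k - (k:ℝ) * wt t j| := by
      rw [hHdef]
      simp only [norm_mul, RCLike.norm_conj, Complex.norm_I, one_mul, e3,
        Complex.norm_real, Real.norm_eq_abs]
    rw [e4]
    calc ‖v (k - j)‖ * ‖w j‖ * ‖w k‖ * |(j:ℝ) * wt t k - (k:ℝ) * wt t j|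
        ≤ ‖v (k - j)‖ * ‖w j‖ * ‖w k‖
            * ((2*t+1) * (K * (wt ((t+1)/2) (k - j) * (wt (t/2) j * wt (t/2) k)))) := by
          refine mul_le_mul_of_nonneg_left (key_ineq ht k j) ?_
          exact mul_nonneg (mul_nonneg (norm_nonneg _) (norm_nonneg _)) (norm_nonneg _)
      _ = ((2*t+1) * K) * ((wt ((t+1)/2) (k - j) * ‖v (k - j)‖)
            * (wt (t/2) j * ‖w j‖) * (wt (t/2) k * ‖w k‖)) := by ring
      _ = ((2*t+1) * K) * (b2 (k - j) * y j * y k) := by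
          rw [hb2def, hydef]
          simp only [Xs]
  have hHnormsum : Summable (fun p => ‖H p‖) :=
    Summable.of_nonneg_of_le (fun p => norm_nonneg _) hHle (hG2sum.mul_left ((2*t+1) * K))
  have h2S : S + (starRingEnd ℂ) S = ∑' p, H p := by
    rw [hconjS, hSdef, ← Summable.tsum_add hFsum hF'sum]
    exact tsum_congr hFF'
  have hre : 2 * S.re = (∑' p, H p).re := by
    rw [← h2S, Complex.add_re, Complex.conj_re]
    ring
  have habs : |S.re| ≤ (∑' p, ‖H p‖) / 2 := by
    have h5 : |(∑' p, H p).re| ≤ ∑' p, ‖H p‖ := by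
      calc |(∑' p, H p).re| ≤ ‖∑' p, H p‖ := by
            exact Complex.abs_re_le_norm _
        _ ≤ ∑' p, ‖H p‖ := norm_tsum_le_tsum_norm hHnormsum
    have h6 : S.re = (∑' p, H p).re / 2 := by linarith [hre]
    rw [h6, abs_div, abs_two]
    linarith [h5, abs_nonneg ((∑' p, H p).re)]
  have hfinal : (∑' p, ‖H p‖) ≤ ((2*t+1) * K) * (C0 * hsNorm (t+2) v * hsNorm t w ^ 2) := by
    have hpos : (0:ℝ) ≤ (2*t+1) * K := mul_nonneg (by linarith) hK0
    calc (∑' p, ‖H p‖)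
        ≤ ∑' p : ℤ × ℤ, ((2*t+1) * K) * (b2 (p.1 - p.2) * y p.2 * y p.1) :=
          Summable.tsum_le_tsum hHle hHnormsum (hG2sum.mul_left ((2*t+1) * K))
      _ = ((2*t+1) * K) * ∑' p : ℤ × ℤ, b2 (p.1 - p.2) * y p.2 * y p.1 := tsum_mul_left
      _ ≤ ((2*t+1) * K) * ((∑' k, b2 k)
            * (Real.sqrt (∑' k, y k ^ 2) * Real.sqrt (∑' k, y k ^ 2))) :=
          mul_le_mul_of_nonneg_left hG2le hpos
      _ ≤ ((2*t+1) * K) * (C0 * hsNorm (t+2) v * hsNorm t w ^ 2) := by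
          rw [hydef, sqrt_tsum_sq, show (t/2 + t/2 : ℝ) = t by ring]
          refine mul_le_mul_of_nonneg_left ?_ hpos
          rw [← pow_two (hsNorm t w)]
          exact mul_le_mul_of_nonneg_right hb2le (sq_nonneg _)
  rw [hS]
  calc |S.re| ≤ (∑' p, ‖H p‖) / 2 := habs
    _ ≤ ((2*t+1) * K) * (C0 * hsNorm (t+2) v * hsNorm t w ^ 2) / 2 := by linarith [hfinal]
    _ = (2*t+1) * K * (C0 * hsNorm (t+2) v * hsNorm t w ^ 2) / 2 := by ring

end St10

/-- Let `s > 11/2`.  There is `C = C(s) > 0` such that for all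
`u, v ∈ H^s(𝕋)` and `η, ρ ∈ H^{s-1}(𝕋)`:
`|(v ∂ₓρ − u ∂ₓη, η − ρ)_{H^{s-3}}|`
`≤ C (‖v‖_{H^s} ‖η−ρ‖²_{H^{s-3}} + ‖η‖²_{H^{s-1}} ‖u−v‖²_{H^{s-3}} + ‖η−ρ‖²_{H^{s-3}})`. -/
theorem statement10 (s : ℝ) (hs : 11 / 2 < s) :
    ∃ C > (0 : ℝ), ∀ u v η ρ : FC,
      FC.memHs s u → FC.memHs s v → FC.memHs (s - 1) η → FC.memHs (s - 1) ρ →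
      FC.isReal u → FC.isReal v → FC.isReal η → FC.isReal ρ →
      |FC.hsInner (s - 3) (FC.mul v (FC.D1 ρ) - FC.mul u (FC.D1 η)) (η - ρ)|
        ≤ C * (FC.hsNorm s v * FC.hsNorm (s - 3) (η - ρ) ^ 2
            + FC.hsNorm (s - 1) η ^ 2 * FC.hsNorm (s - 3) (u - v) ^ 2
            + FC.hsNorm (s - 3) (η - ρ) ^ 2) := by
  have ht1 : (1:ℝ) ≤ s - 3 := by linarith
  have ht0 : (0:ℝ) ≤ s - 3 := by linarith
  set t : ℝ := s - 3 with htdef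
  open St10 in
  set CA : ℝ := (2*t+1) * (2:ℝ)^(t/2) * St10.C0 with hCAdef
  set CB : ℝ := (2:ℝ)^(t/2) * St10.C0 with hCBdef
  have hK0 : (0:ℝ) ≤ (2:ℝ)^(t/2) := (Real.rpow_pos_of_pos (by norm_num) _).le
  have hCA0 : 0 ≤ CA := mul_nonneg (mul_nonneg (by linarith) hK0) St10.C0_nonneg
  have hCB0 : 0 ≤ CB := mul_nonneg hK0 St10.C0_nonneg
  refine ⟨CA/2 + CB/2 + 1, by linarith, ?_⟩
  intro u v η ρ hu hv hη hρ hru hrv hrη hrρ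
  set w : FC := η - ρ with hwdef
  have hs1 : t + 2 = s - 1 := by rw [htdef]; ring
  have hvs : Summable fun k => FC.wt (t+2) k * ‖v k‖^2 :=
    St10.summable_wt_of_le (by linarith) hv
  have hηs : Summable fun k => FC.wt (t+2) k * ‖η k‖^2 := by rw [hs1]; exact hη
  have hρs : Summable fun k => FC.wt (t+2) k * ‖ρ k‖^2 := by rw [hs1]; exact hρ
  have hw2 : Summable fun k => FC.wt (t+2) k * ‖w k‖^2 := by
    refine Summable.of_nonneg_of_le
      (fun k => mul_nonneg (St10.wt_nonneg _ _) (sq_nonneg _)) (fun k => ?_)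
      ((hηs.add hρs).mul_left 2)
    have h2 : ‖w k‖ ≤ ‖η k‖ + ‖ρ k‖ := by
      rw [hwdef, Pi.sub_apply]
      exact norm_sub_le _ _
    have h1 : ‖w k‖^2 ≤ 2*‖η k‖^2 + 2*‖ρ k‖^2 := by
      nlinarith [sq_nonneg (‖η k‖ - ‖ρ k‖), pow_le_pow_left₀ (norm_nonneg (w k)) h2 2]
    calc FC.wt (t+2) k * ‖w k‖^2 ≤ FC.wt (t+2) k * (2*‖η k‖^2 + 2*‖ρ k‖^2) :=
        mul_le_mul_of_nonneg_left h1 (St10.wt_nonneg _ _)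
      _ = 2 * (FC.wt (t+2) k * ‖η k‖^2 + FC.wt (t+2) k * ‖ρ k‖^2) := by ring
  have huts : Summable fun k => FC.wt t k * ‖u k‖^2 :=
    St10.summable_wt_of_le (by linarith) hu
  have hvts : Summable fun k => FC.wt t k * ‖v k‖^2 :=
    St10.summable_wt_of_le (by linarith) hv
  have huv : Summable fun k => FC.wt t k * ‖(u - v) k‖^2 := by
    refine Summable.of_nonneg_of_le
      (fun k => mul_nonneg (St10.wt_nonneg _ _) (sq_nonneg _)) (fun k => ?_)
      ((huts.add hvts).mul_left 2)
    have h2 : ‖(u - v) k‖ ≤ ‖u k‖ + ‖v k‖ := by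
      rw [Pi.sub_apply]
      exact norm_sub_le _ _
    have h1 : ‖(u - v) k‖^2 ≤ 2*‖u k‖^2 + 2*‖v k‖^2 := by
      nlinarith [sq_nonneg (‖u k‖ - ‖v k‖), pow_le_pow_left₀ (norm_nonneg ((u - v) k)) h2 2]
    calc FC.wt t k * ‖(u - v) k‖^2 ≤ FC.wt t k * (2*‖u k‖^2 + 2*‖v k‖^2) :=
        mul_le_mul_of_nonneg_left h1 (St10.wt_nonneg _ _)
      _ = 2 * (FC.wt t k * ‖u k‖^2 + FC.wt t k * ‖v k‖^2) := by ring
  have hwt : Summable fun k => FC.wt t k * ‖w k‖^2 :=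
    St10.summable_wt_of_le (by linarith) hw2
  -- coefficientwise identity
  have hnv2 : Summable fun k => ‖v k‖^2 := St10.summable_norm_sq_of_wt (by linarith) hv
  have hnu2 : Summable fun k => ‖u k‖^2 := St10.summable_norm_sq_of_wt (by linarith) hu
  have hnuv2 : Summable fun k => ‖(u - v) k‖^2 := St10.summable_norm_sq_of_wt ht0 huv
  have hD1ρ : Summable fun k => ‖FC.D1 ρ k‖^2 :=
    St10.summable_D1_sq (show (1:ℝ) ≤ s - 1 by linarith) hρ
  have hD1η : Summable fun k => ‖FC.D1 η k‖^2 :=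
    St10.summable_D1_sq (show (1:ℝ) ≤ s - 1 by linarith) hη
  have hD1w : Summable fun k => ‖FC.D1 w k‖^2 :=
    St10.summable_D1_sq (show (1:ℝ) ≤ t + 2 by linarith) hw2
  have hid : ∀ k, (FC.mul v (FC.D1 ρ) - FC.mul u (FC.D1 η)) k
      = -(FC.mul v (FC.D1 w) k) - FC.mul (u - v) (FC.D1 η) k := by
    intro k
    have h1 : Summable fun j => v j * FC.D1 ρ (k - j) :=
      St10.conv_summand_summable hnv2 hD1ρ k
    have h2 : Summable fun j => u j * FC.D1 η (k - j) :=
      St10.conv_summand_summable hnu2 hD1η k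
    have h3 : Summable fun j => v j * FC.D1 w (k - j) :=
      St10.conv_summand_summable hnv2 hD1w k
    have h4 : Summable fun j => (u - v) j * FC.D1 η (k - j) :=
      St10.conv_summand_summable hnuv2 hD1η k
    have e0 : (FC.mul v (FC.D1 ρ) - FC.mul u (FC.D1 η)) k
        = (∑' j, v j * FC.D1 ρ (k - j)) - ∑' j, u j * FC.D1 η (k - j) := rfl
    rw [e0, ← Summable.tsum_sub h1 h2]
    rw [show (∑' j, (v j * FC.D1 ρ (k - j) - u j * FC.D1 η (k - j)))
        = ∑' j, ((-(v j * FC.D1 w (k - j))) - (u - v) j * FC.D1 η (k - j)) from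
      tsum_congr fun j => by
        rw [hwdef]
        simp only [FC.D1, Pi.sub_apply]
        ring]
    rw [Summable.tsum_sub h3.neg h4, tsum_neg]
    rfl
  obtain ⟨hAsum, hAle⟩ := St10.lemA t ht1 v w hrv hvs hw2
  obtain ⟨hBsum, hBle⟩ := St10.lemB t ht1 (u - v) η w huv hηs hwt
  have hsplit : FC.hsInner t (FC.mul v (FC.D1 ρ) - FC.mul u (FC.D1 η)) w
      = -(∑' k, (FC.wt t k : ℂ) * (FC.mul v (FC.D1 w) k * (starRingEnd ℂ) (w k))).re
        - (∑' k, (FC.wt t k : ℂ) * (FC.mul (u - v) (FC.D1 η) k * (starRingEnd ℂ) (w k))).re := by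
    rw [FC.hsInner]
    rw [show (fun k => ((FC.wt t k : ℂ)
          * ((FC.mul v (FC.D1 ρ) - FC.mul u (FC.D1 η)) k * (starRingEnd ℂ) (w k))))
        = fun k => (-((FC.wt t k : ℂ) * (FC.mul v (FC.D1 w) k * (starRingEnd ℂ) (w k))))
            - ((FC.wt t k : ℂ) * (FC.mul (u - v) (FC.D1 η) k * (starRingEnd ℂ) (w k))) from
      funext fun k => by rw [hid k]; ring]
    rw [Summable.tsum_sub hAsum.neg hBsum, tsum_neg]
    simp [Complex.sub_re, Complex.neg_re]
  rw [hsplit]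
  set A : ℝ := (∑' k, (FC.wt t k : ℂ) * (FC.mul v (FC.D1 w) k * (starRingEnd ℂ) (w k))).re with hAdef
  set B : ℝ := (∑' k, (FC.wt t k : ℂ) * (FC.mul (u - v) (FC.D1 η) k * (starRingEnd ℂ) (w k))).re with hBdef
  have habs : |(-A) - B| ≤ |A| + |B| := by
    rw [show (-A) - B = -(A + B) by ring, abs_neg]
    exact abs_add_le _ _
  set N1 : ℝ := FC.hsNorm s v with hN1
  set N2 : ℝ := FC.hsNorm (s - 1) η with hN2
  set N3 : ℝ := FC.hsNorm t (u - v) with hN3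
  set N4 : ℝ := FC.hsNorm t w with hN4
  have hN10 : 0 ≤ N1 := St10.hsNorm_nonneg _ _
  have hN20 : 0 ≤ N2 := St10.hsNorm_nonneg _ _
  have hN30 : 0 ≤ N3 := St10.hsNorm_nonneg _ _
  have hN40 : 0 ≤ N4 := St10.hsNorm_nonneg _ _
  have hmono : FC.hsNorm (t + 2) v ≤ N1 := by
    rw [hN1]
    exact St10.hsNorm_mono (by linarith) hv
  have hvle0 : 0 ≤ FC.hsNorm (t + 2) v := St10.hsNorm_nonneg _ _
  have hA2 : |A| ≤ CA * (N1 * N4 ^ 2) / 2 := by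
    calc |A| ≤ (2*t+1) * (2:ℝ)^(t/2) * (St10.C0 * FC.hsNorm (t+2) v * FC.hsNorm t w ^ 2) / 2 := hAle
      _ = CA * (FC.hsNorm (t+2) v * N4 ^ 2) / 2 := by rw [hCAdef, hN4]; ring
      _ ≤ CA * (N1 * N4 ^ 2) / 2 := by
          have := mul_le_mul_of_nonneg_right hmono (sq_nonneg N4)
          have h7 := mul_le_mul_of_nonneg_left this hCA0
          linarith
  have hη2 : FC.hsNorm (t + 2) η = N2 := by rw [hs1, hN2]
  have hB2 : |B| ≤ CB * (N2 * (N3 * N4)) := by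
    calc |B| ≤ (2:ℝ)^(t/2) * (St10.C0 * FC.hsNorm (t+2) η * (FC.hsNorm t (u-v) * FC.hsNorm t w)) := hBle
      _ = CB * (N2 * (N3 * N4)) := by rw [hCBdef, hη2, hN3, hN4]; ring
  have hamgm : N2 * (N3 * N4) ≤ (N2^2 * N3^2 + N4^2) / 2 := by
    nlinarith [sq_nonneg (N2 * N3 - N4), mul_nonneg hN20 hN30]
  have hP0 : 0 ≤ N1 * N4 ^ 2 := mul_nonneg hN10 (sq_nonneg _)
  have hQ0 : 0 ≤ N2 ^ 2 * N3 ^ 2 := mul_nonneg (sq_nonneg _) (sq_nonneg _)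
  have hR0 : 0 ≤ N4 ^ 2 := sq_nonneg _
  have hB3 : |B| ≤ CB/2 * (N2^2 * N3^2) + CB/2 * N4^2 := by
    calc |B| ≤ CB * (N2 * (N3 * N4)) := hB2
      _ ≤ CB * ((N2^2 * N3^2 + N4^2) / 2) := mul_le_mul_of_nonneg_left hamgm hCB0
      _ = CB/2 * (N2^2 * N3^2) + CB/2 * N4^2 := by ring
  have hC1 : CA / 2 ≤ CA/2 + CB/2 + 1 := by linarith
  have hC2 : CB / 2 ≤ CA/2 + CB/2 + 1 := by linarith
  calc |(-A) - B| ≤ |A| + |B| := habs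
    _ ≤ CA/2 * (N1 * N4^2) + (CB/2 * (N2^2 * N3^2) + CB/2 * N4^2) := by
        have : CA * (N1 * N4 ^ 2) / 2 = CA/2 * (N1 * N4^2) := by ring
        linarith [hA2, hB3]
    _ ≤ (CA/2 + CB/2 + 1) * (N1 * N4^2) + ((CA/2 + CB/2 + 1) * (N2^2 * N3^2)
          + (CA/2 + CB/2 + 1) * N4^2) := by
        refine add_le_add (mul_le_mul_of_nonneg_right hC1 hP0)
          (add_le_add (mul_le_mul_of_nonneg_right hC2 hQ0)
            (mul_le_mul_of_nonneg_right hC2 hR0))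
    _ = (CA/2 + CB/2 + 1) * (N1 * N4^2 + N2^2 * N3^2 + N4^2) := by ring
end
end

section
/- Let s > 11/2 and suppose (ξ_k)_{k≥1} satisfies Σ_{k≥1} ‖ξ_k‖_{H^σ} < ∞ for every σ ≥ 0. For ε ∈ (0,1) and X = (u,η) ∈ H^s(𝕋) × H^{s-1}(𝕋), set h_ε^k(X) = (−J_ε (1−∂²_x)^{-1} 𝓛_{ξ_k} (1−∂²_x) J_ε u, −J_ε 𝓛_{ξ_k} J_ε η). Then there is a constant C > 0, independent of ε, such that for all X: Σ_{k=1}^∞ |(h_ε^k(X), X)_{H^s×H^{s-1}}|² ≤ C (‖u‖²_{H^s} + ‖η‖²_{H^{s-1}})². -/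
noncomputable section
open scoped BigOperators

/-- First component of the mollified diffusion coefficient `h_ε^k`:
`−J_ε (1−∂ₓ²)⁻¹ 𝓛_{ξ_k} (1−∂ₓ²) J_ε u`. -/
def hMol1 (jh : ℝ → ℝ) (ε : ℝ) (ξ : ℕ → FC) (k : ℕ) (u : FC) : FC :=
  -(FC.Jmol jh ε (FC.helmInv (FC.lie (ξ k) (FC.helm (FC.Jmol jh ε u)))))

/-- Second component of the mollified diffusion coefficient `h_ε^k`:
`−J_ε 𝓛_{ξ_k} J_ε η`. -/
def hMol2 (jh : ℝ → ℝ) (ε : ℝ) (ξ : ℕ → FC) (k : ℕ) (η : FC) : FC :=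
  -(FC.Jmol jh ε (FC.lie (ξ k) (FC.Jmol jh ε η)))

namespace S16

/-- weight on reals -/
def W (t x : ℝ) : ℝ := (1 + x ^ 2) ^ t

lemma base_pos (x : ℝ) : (0:ℝ) < 1 + x ^ 2 := by positivity

lemma W_pos (t x : ℝ) : 0 < W t x := Real.rpow_pos_of_pos (base_pos x) t

lemma W_nonneg (t x : ℝ) : 0 ≤ W t x := (W_pos t x).le

lemma one_le_W (t x : ℝ) (ht : 0 ≤ t) : 1 ≤ W t x := by
  have : (1:ℝ) = (1:ℝ) ^ t := (Real.one_rpow t).symm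
  rw [this, W]
  exact Real.rpow_le_rpow (by norm_num) (by nlinarith [sq_nonneg x]) ht

lemma W_add (t₁ t₂ x : ℝ) : W (t₁ + t₂) x = W t₁ x * W t₂ x :=
  Real.rpow_add (base_pos x) t₁ t₂

lemma W_one (x : ℝ) : W 1 x = 1 + x ^ 2 := Real.rpow_one _

lemma W_mono (t₁ t₂ x : ℝ) (h : t₁ ≤ t₂) : W t₁ x ≤ W t₂ x :=
  Real.rpow_le_rpow_of_exponent_le (by nlinarith [sq_nonneg x]) h

lemma W_even (t x : ℝ) : W t (-x) = W t x := by simp [W]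

lemma W_arg_mono (t x y : ℝ) (ht : 0 ≤ t) (h : x ^ 2 ≤ y ^ 2) : W t x ≤ W t y :=
  Real.rpow_le_rpow (base_pos x).le (by linarith) ht

lemma abs_le_W_one (x : ℝ) : |x| ≤ W 1 x := by
  rw [W_one]
  nlinarith [abs_nonneg x, sq_abs x]

lemma peetre (t x y : ℝ) (ht : 0 ≤ t) : W t (x + y) ≤ 2 ^ t * W t x * W t y := by
  have h1 : (1:ℝ) + (x+y)^2 ≤ 2 * ((1 + x^2) * (1 + y^2)) := by nlinarith [sq_nonneg (x - y), sq_nonneg (x*y)]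
  have h2 : W t (x+y) ≤ (2 * ((1 + x^2) * (1 + y^2))) ^ t :=
    Real.rpow_le_rpow (base_pos _).le h1 ht
  calc W t (x+y) ≤ (2 * ((1 + x^2) * (1 + y^2))) ^ t := h2
    _ = 2 ^ t * W t x * W t y := by
        rw [Real.mul_rpow (by norm_num) (by positivity),
          Real.mul_rpow (base_pos x).le (base_pos y).le, W, W, mul_assoc]


/-- `φ_σ(x) = x (1+x²)^σ`. -/
def phi (σ x : ℝ) : ℝ := x * W σ x

lemma phi_hasDeriv (σ x : ℝ) (hσ : 1 ≤ σ) :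
    HasDerivAt (phi σ) (W σ x + x * (σ * W (σ-1) x * (2 * x ^ 1))) x := by
  have hin : HasDerivAt (fun y : ℝ => 1 + y ^ 2) (2 * x ^ 1) x :=
    (hasDerivAt_pow 2 x).const_add 1
  have hout : HasDerivAt (fun y : ℝ => y ^ σ) (σ * (1 + x ^ 2) ^ (σ - 1)) (1 + x ^ 2) :=
    Real.hasDerivAt_rpow_const (Or.inl (base_pos x).ne')
  have hW : HasDerivAt (fun y : ℝ => W σ y) (σ * W (σ-1) x * (2 * x ^ 1)) x := by
    have := hout.comp x hin
    simpa [W, Function.comp_def] using this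
  have h := (hasDerivAt_id x).mul hW
  have h2 : HasDerivAt (phi σ) (1 * W σ x + id x * (σ * W (σ - 1) x * (2 * x ^ 1))) x := h
  simpa using h2

lemma phi_deriv_bound (σ x : ℝ) (hσ : 1 ≤ σ) :
    |W σ x + x * (σ * W (σ-1) x * (2 * x ^ 1))| ≤ (2 * σ + 1) * W σ x := by
  have h1 : x * (σ * W (σ-1) x * (2 * x ^ 1)) = 2 * σ * (x ^ 2 * W (σ-1) x) := by ring
  have h2 : x ^ 2 * W (σ-1) x ≤ W σ x := by
    have : x ^ 2 * W (σ-1) x ≤ (1 + x ^ 2) * W (σ-1) x := by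
      have := W_nonneg (σ-1) x; nlinarith
    calc x ^ 2 * W (σ-1) x ≤ (1 + x ^ 2) * W (σ-1) x := this
      _ = W 1 x * W (σ-1) x := by rw [W_one]
      _ = W σ x := by rw [← W_add]; norm_num
  have h3 : 0 ≤ x ^ 2 * W (σ-1) x := mul_nonneg (sq_nonneg x) (W_nonneg _ _)
  rw [h1, abs_of_nonneg (by nlinarith [W_nonneg σ x])]
  nlinarith [W_nonneg σ x]

/-- MVT estimate for `a < b`. -/
lemma phi_diff_aux (σ a b : ℝ) (hσ : 2 ≤ σ) (hab : a < b) :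
    |phi σ b - phi σ a| ≤ (2 * σ + 1) * 2 ^ σ * W σ a * W σ (b - a) * (b - a) := by
  have hσ1 : (1:ℝ) ≤ σ := by linarith
  have hcont : ContinuousOn (phi σ) (Set.Icc a b) :=
    fun x _ => ((phi_hasDeriv σ x hσ1).continuousAt).continuousWithinAt
  obtain ⟨c, hc, hceq⟩ := exists_hasDerivAt_eq_slope (phi σ)
    (fun x => W σ x + x * (σ * W (σ-1) x * (2 * x ^ 1))) hab hcont
    (fun x _ => phi_hasDeriv σ x hσ1)
  have hne : b - a ≠ 0 := by linarith
  rw [eq_div_iff hne] at hceq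
  have hval : phi σ b - phi σ a = (W σ c + c * (σ * W (σ-1) c * (2 * c ^ 1))) * (b - a) := by
    linarith [hceq]
  have hWc : W σ c ≤ 2 ^ σ * W σ a * W σ (b - a) := by
    have h1 : W σ c = W σ (a + (c - a)) := by ring_nf
    have h2 : W σ (a + (c-a)) ≤ 2 ^ σ * W σ a * W σ (c - a) := peetre σ a (c-a) (by linarith)
    have h3 : W σ (c - a) ≤ W σ (b - a) := by
      apply W_arg_mono _ _ _ (by linarith)
      have h4 : 0 ≤ c - a := by linarith [hc.1]
      have h5 : c - a ≤ b - a := by linarith [hc.2]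
      nlinarith
    calc W σ c = W σ (a + (c-a)) := h1
      _ ≤ 2 ^ σ * W σ a * W σ (c-a) := h2
      _ ≤ 2 ^ σ * W σ a * W σ (b-a) := by
          have : (0:ℝ) ≤ 2 ^ σ * W σ a :=
            mul_nonneg (Real.rpow_nonneg (by norm_num) σ) (W_nonneg _ _)
          nlinarith
  rw [hval, abs_mul, abs_of_nonneg (by linarith : (0:ℝ) ≤ b - a)]
  have := phi_deriv_bound σ c hσ1
  have hpos : (0:ℝ) ≤ b - a := by linarith
  have h2σ : (0:ℝ) ≤ 2*σ+1 := by linarith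
  have : |W σ c + c * (σ * W (σ-1) c * (2 * c ^ 1))| ≤ (2*σ+1) * (2 ^ σ * W σ a * W σ (b-a)) := by
    calc |W σ c + c * (σ * W (σ-1) c * (2 * c ^ 1))| ≤ (2*σ+1) * W σ c := this
      _ ≤ (2*σ+1) * (2 ^ σ * W σ a * W σ (b-a)) := by nlinarith [W_pos σ c]
  calc |W σ c + c * (σ * W (σ-1) c * (2 * c ^ 1))| * (b-a)
      ≤ ((2*σ+1) * (2 ^ σ * W σ a * W σ (b-a))) * (b-a) := by
        apply mul_le_mul_of_nonneg_right this hpos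
    _ = (2*σ+1) * 2 ^ σ * W σ a * W σ (b-a) * (b-a) := by ring

/-- Final symmetric difference estimate. -/
lemma phi_diff (σ a b : ℝ) (hσ : 2 ≤ σ) :
    |phi σ b - phi σ a| ≤ (2 * σ + 1) * 2 ^ (2*σ) * W (2*σ) (b - a) * (W (σ/2) a * W (σ/2) b) := by
  have key : ∀ a b : ℝ, a < b →
      |phi σ b - phi σ a| ≤ (2 * σ + 1) * 2 ^ (2*σ) * W (2*σ) (b - a) * (W (σ/2) a * W (σ/2) b) := by
    intro a b hab
    have h0 := phi_diff_aux σ a b hσ hab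
    -- upgrade:  W σ a ≤ 2^(σ/2) * W (σ/2) b * W (σ/2) (a-b) * W (σ/2) a
    have hWa : W σ a ≤ 2 ^ (σ/2) * W (σ/2) (b-a) * (W (σ/2) a * W (σ/2) b) := by
      have h1 : W σ a = W (σ/2) a * W (σ/2) a := by
        rw [← W_add]; ring_nf
      have h2 : W (σ/2) a = W (σ/2) (b + (a - b)) := by ring_nf
      have h3 : W (σ/2) (b + (a-b)) ≤ 2 ^ (σ/2) * W (σ/2) b * W (σ/2) (a-b) :=
        peetre _ _ _ (by linarith)
      have h4 : W (σ/2) (a-b) = W (σ/2) (b-a) := by rw [← W_even]; ring_nf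
      have h5 : W (σ/2) a ≤ 2 ^ (σ/2) * W (σ/2) b * W (σ/2) (b-a) := by
        rw [h2]; rw [h4] at h3; exact h3
      calc W σ a = W (σ/2) a * W (σ/2) a := h1
        _ ≤ (2 ^ (σ/2) * W (σ/2) b * W (σ/2) (b-a)) * W (σ/2) a := by
            nlinarith [W_pos (σ/2) a]
        _ = 2 ^ (σ/2) * W (σ/2) (b-a) * (W (σ/2) a * W (σ/2) b) := by ring
    -- weights on (b-a): W σ (b-a) * (b-a) * W (σ/2) (b-a) ≤ W (2σ) (b-a) up to nothing
    have hj : W σ (b-a) * (b-a) * W (σ/2) (b-a) ≤ W (2*σ) (b-a) := by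
      have hba : b - a ≤ |b - a| := le_abs_self _
      have h1 : (b-a) ≤ W 1 (b-a) := le_trans hba (abs_le_W_one _)
      have h2 : W σ (b-a) * (b-a) * W (σ/2) (b-a) ≤ W σ (b-a) * W 1 (b-a) * W (σ/2) (b-a) :=
        mul_le_mul_of_nonneg_right
          (mul_le_mul_of_nonneg_left h1 (W_nonneg σ (b-a))) (W_nonneg (σ/2) (b-a))
      have h3 : W σ (b-a) * W 1 (b-a) * W (σ/2) (b-a) = W (σ + 1 + σ/2) (b-a) := by
        rw [W_add, W_add]
      have h4 : W (σ + 1 + σ/2) (b-a) ≤ W (2*σ) (b-a) := W_mono _ _ _ (by linarith)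
      linarith
    have h2exp : (2:ℝ) ^ σ * 2 ^ (σ/2) ≤ 2 ^ (2*σ) := by
      rw [← Real.rpow_add (by norm_num)]
      exact Real.rpow_le_rpow_of_exponent_le (by norm_num) (by linarith)
    calc |phi σ b - phi σ a| ≤ (2*σ+1) * 2 ^ σ * W σ a * W σ (b-a) * (b-a) := h0
      _ ≤ (2*σ+1) * 2 ^ σ * (2 ^ (σ/2) * W (σ/2) (b-a) * (W (σ/2) a * W (σ/2) b)) * W σ (b-a) * (b-a) := by
          have hc : (0:ℝ) ≤ (2*σ+1) * 2 ^ σ := by positivity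
          have hd : (0:ℝ) ≤ W σ (b-a) * (b-a) := by
            have := W_nonneg σ (b-a); nlinarith
          nlinarith [W_nonneg σ a, mul_le_mul_of_nonneg_left hWa hc]
      _ = ((2*σ+1) * (2 ^ σ * 2 ^ (σ/2))) * (W σ (b-a) * (b-a) * W (σ/2) (b-a)) * (W (σ/2) a * W (σ/2) b) := by ring
      _ ≤ ((2*σ+1) * 2 ^ (2*σ)) * W (2*σ) (b-a) * (W (σ/2) a * W (σ/2) b) := by
          have hA : (0:ℝ) ≤ 2*σ+1 := by linarith
          have hB : (0:ℝ) ≤ W (σ/2) a * W (σ/2) b := mul_nonneg (W_nonneg _ _) (W_nonneg _ _)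
          have hnn : (0:ℝ) ≤ W σ (b-a) * (b-a) * W (σ/2) (b-a) :=
            mul_nonneg (mul_nonneg (W_nonneg _ _) (by linarith)) (W_nonneg _ _)
          have hcc : (0:ℝ) ≤ (2*σ+1) * 2 ^ (2*σ) :=
            mul_nonneg hA (Real.rpow_nonneg (by norm_num) _)
          apply mul_le_mul_of_nonneg_right _ hB
          exact mul_le_mul (mul_le_mul_of_nonneg_left h2exp hA) hj hnn hcc
      _ = (2*σ+1) * 2 ^ (2*σ) * W (2*σ) (b-a) * (W (σ/2) a * W (σ/2) b) := by ring
  rcases lt_trichotomy a b with h | h | h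
  · exact key a b h
  · subst h
    simp only [sub_self, abs_zero]
    have h1 : (0:ℝ) ≤ 2*σ+1 := by linarith
    have h2 : W (2*σ) 0 = 1 := by simp [W]
    rw [h2]
    exact mul_nonneg (mul_nonneg (mul_nonneg h1 (Real.rpow_nonneg (by norm_num) _)) (by norm_num))
      (mul_nonneg (W_nonneg _ _) (W_nonneg _ _))
  · have := key b a h
    have h1 : |phi σ a - phi σ b| = |phi σ b - phi σ a| := abs_sub_comm _ _
    have h2 : W (2*σ) (a - b) = W (2*σ) (b - a) := by rw [← W_even]; ring_nf
    rw [h1, h2] at this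
    calc |phi σ b - phi σ a| ≤ (2*σ+1) * 2^(2*σ) * W (2*σ) (b-a) * (W (σ/2) b * W (σ/2) a) := this
      _ = (2*σ+1) * 2^(2*σ) * W (2*σ) (b-a) * (W (σ/2) a * W (σ/2) b) := by ring


lemma wt_eq (s : ℝ) (k : ℤ) : FC.wt s k = W s (k:ℝ) := rfl

lemma summable_invW : Summable (fun j : ℤ => W (-1) (j:ℝ)) := by
  have hg : Summable (fun j : ℤ => 1 / (j:ℝ) ^ 2 + (if j = 0 then (1:ℝ) else 0)) := by
    apply Summable.add
    · exact (Real.summable_one_div_int_pow (p := 2)).mpr (by norm_num)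
    · exact summable_of_ne_finset_zero (s := {(0:ℤ)}) (by intro b hb; simp at hb ⊢; tauto)
  apply Summable.of_nonneg_of_le (fun j => W_nonneg _ _) _ hg
  intro j
  rw [show W (-1) (j:ℝ) = (1 + (j:ℝ)^2)⁻¹ by rw [W, Real.rpow_neg_one]]
  by_cases hj : j = 0
  · subst hj; norm_num
  · have hj2 : (1:ℝ) ≤ (j:ℝ)^2 := by
      have h5 : (1:ℝ) ≤ |(j:ℝ)| := by
        rw [← Int.cast_abs]; exact_mod_cast Int.one_le_abs (by omega)
      nlinarith [sq_abs ((j:ℝ)), h5]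
    have h0 : (0:ℝ) < (j:ℝ)^2 := by linarith
    have : (1 + (j:ℝ)^2)⁻¹ ≤ 1/(j:ℝ)^2 := by
      rw [one_div]
      exact inv_anti₀ h0 (by linarith)
    rw [if_neg hj]
    linarith

lemma sqrt_amgm (a b : ℝ) (ha : 0 ≤ a) (hb : 0 ≤ b) : Real.sqrt (a * b) ≤ (a + b) / 2 := by
  rw [Real.sqrt_mul ha]
  nlinarith [Real.sq_sqrt ha, Real.sq_sqrt hb, sq_nonneg (Real.sqrt a - Real.sqrt b),
    Real.sqrt_nonneg a, Real.sqrt_nonneg b]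

lemma tsum_cs (P Q : ℤ → ℝ) (hP0 : ∀ j, 0 ≤ P j) (hQ0 : ∀ j, 0 ≤ Q j)
    (hPs : Summable P) (hQs : Summable Q) :
    Summable (fun j => Real.sqrt (P j * Q j)) ∧
      ∑' j, Real.sqrt (P j * Q j) ≤ Real.sqrt (∑' j, P j) * Real.sqrt (∑' j, Q j) := by
  have hsum : Summable (fun j => Real.sqrt (P j * Q j)) := by
    apply Summable.of_nonneg_of_le (fun j => Real.sqrt_nonneg _)
      (fun j => sqrt_amgm _ _ (hP0 j) (hQ0 j)) (by exact (hPs.add hQs).div_const 2)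
  refine ⟨hsum, ?_⟩
  set X := ∑' j, P j with hX
  set Y := ∑' j, Q j with hY
  have hX0 : 0 ≤ X := tsum_nonneg hP0
  have hY0 : 0 ≤ Y := tsum_nonneg hQ0
  by_cases hYz : Y = 0
  · have hQz : ∀ j, Q j = 0 := by
      intro j
      have := Summable.le_tsum hQs j (fun i _ => hQ0 i)
      have := hQ0 j; rw [← hY] at *; linarith
    have : ∀ j, Real.sqrt (P j * Q j) = 0 := by intro j; rw [hQz j]; simp
    rw [tsum_congr this]
    simp [tsum_zero]
    positivity
  by_cases hXz : X = 0
  · have hPz : ∀ j, P j = 0 := by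
      intro j
      have := Summable.le_tsum hPs j (fun i _ => hP0 i)
      have := hP0 j; rw [← hX] at *; linarith
    have : ∀ j, Real.sqrt (P j * Q j) = 0 := by intro j; rw [hPz j]; simp
    rw [tsum_congr this]
    simp [tsum_zero]
    positivity
  have hXpos : 0 < X := lt_of_le_of_ne hX0 (Ne.symm hXz)
  have hYpos : 0 < Y := lt_of_le_of_ne hY0 (Ne.symm hYz)
  set t := Real.sqrt Y / Real.sqrt X with ht
  have hXs : 0 < Real.sqrt X := Real.sqrt_pos.mpr hXpos
  have hYs : 0 < Real.sqrt Y := Real.sqrt_pos.mpr hYpos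
  have htpos : 0 < t := div_pos hYs hXs
  have hpt : ∀ j, Real.sqrt (P j * Q j) ≤ (t * P j + Q j / t) / 2 := by
    intro j
    have h1 : (t * P j) * (Q j / t) = P j * Q j := by field_simp
    rw [← h1]
    exact sqrt_amgm _ _ (mul_nonneg htpos.le (hP0 j)) (div_nonneg (hQ0 j) htpos.le)
  have hsum2 : Summable (fun j => (t * P j + Q j / t) / 2) :=
    ((hPs.mul_left t).add (hQs.div_const t)).div_const 2
  have h2 : ∑' j, Real.sqrt (P j * Q j) ≤ ∑' j, (t * P j + Q j / t) / 2 :=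
    Summable.tsum_le_tsum hpt hsum hsum2
  have h3 : ∑' j, (t * P j + Q j / t) / 2 = (t * X + Y / t) / 2 := by
    rw [tsum_div_const, Summable.tsum_add (hPs.mul_left t) (hQs.div_const t), tsum_mul_left,
      tsum_div_const]
  have h4 : (t * X + Y / t) / 2 = Real.sqrt X * Real.sqrt Y := by
    rw [ht]
    have hXX : Real.sqrt X * Real.sqrt X = X := Real.mul_self_sqrt hX0
    have hYY : Real.sqrt Y * Real.sqrt Y = Y := Real.mul_self_sqrt hY0
    field_simp
    nlinarith [hXX, hYY]
  linarith [h2, h3 ▸ h2, h4 ▸ (h3 ▸ h2)]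

lemma amgm2 (x y : ℝ) : x * y ≤ (x ^ 2 + y ^ 2) / 2 := by nlinarith [sq_nonneg (x - y)]

lemma Wsq (t x : ℝ) : W t x ^ 2 = W (2 * t) x := by rw [sq, ← W_add]; ring_nf

open Complex in
/-- the core commutator estimate -/
lemma core (s σ : ℝ) (hσ2 : 2 ≤ σ) (hσs : σ + 1 ≤ s) :
    ∃ K > (0:ℝ), ∀ (ξ g : FC), FC.isReal ξ →
      Summable (fun j : ℤ => W (2*s) (j:ℝ) * ‖ξ j‖) →
      Summable (fun k : ℤ => W σ (k:ℝ) * ‖g k‖ ^ 2) →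
      Summable (fun k : ℤ => W (σ+2) (k:ℝ) * ‖g k‖ ^ 2) →
      |FC.hsInner σ (FC.lie ξ g) g| ≤
        K * (∑' j : ℤ, W (2*s) (j:ℝ) * ‖ξ j‖) *
          (∑' k : ℤ, W σ (k:ℝ) * ‖g k‖^2) := by
  have hs3 : (3:ℝ) ≤ s := by linarith
  refine ⟨(2*σ+1) * 2^(2*σ),
    mul_pos (by linarith) (Real.rpow_pos_of_pos (by norm_num) _), ?_⟩
  intro ξ g hξr ha hb hb2
  set Cphi : ℝ := (2*σ+1) * 2^(2*σ) with hCphi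
  set a : ℤ → ℝ := fun j => W (2*s) (j:ℝ) * ‖ξ j‖ with ha_def
  set bsq : ℤ → ℝ := fun k => W σ (k:ℝ) * ‖g k‖ ^ 2 with hbsq_def
  set bsq2 : ℤ → ℝ := fun k => W (σ+2) (k:ℝ) * ‖g k‖ ^ 2 with hbsq2_def
  set L : ℝ := ∑' j, a j with hL
  set G : ℝ := ∑' k, bsq k with hG
  set G2 : ℝ := ∑' k, bsq2 k with hG2
  have ha0 : ∀ j, 0 ≤ a j := fun j => mul_nonneg (W_nonneg _ _) (norm_nonneg _)
  have hbsq0 : ∀ k, 0 ≤ bsq k := fun k => mul_nonneg (W_nonneg _ _) (sq_nonneg _)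
  have hbsq20 : ∀ k, 0 ≤ bsq2 k := fun k => mul_nonneg (W_nonneg _ _) (sq_nonneg _)
  have hG20 : 0 ≤ G2 := tsum_nonneg hbsq20
  -- decay facts
  have hξ_le : ∀ j, ‖ξ j‖ ≤ a j := fun j =>
    le_mul_of_one_le_left (norm_nonneg _) (one_le_W _ _ (by linarith))
  have hξj_le : ∀ j : ℤ, |(j:ℝ)| * ‖ξ j‖ ≤ a j := by
    intro j
    apply mul_le_mul_of_nonneg_right _ (norm_nonneg _)
    calc |(j:ℝ)| ≤ W 1 (j:ℝ) := abs_le_W_one _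
      _ ≤ W (2*s) (j:ℝ) := W_mono _ _ _ (by linarith)
  have hg_sq_le : ∀ m : ℤ, ‖g m‖ ^ 2 ≤ G2 := by
    intro m
    have h1 : ‖g m‖ ^ 2 ≤ W (σ+2) (m:ℝ) * ‖g m‖ ^ 2 :=
      le_mul_of_one_le_left (sq_nonneg _) (one_le_W _ _ (by linarith))
    exact h1.trans (Summable.le_tsum hb2 m (fun i _ => hbsq20 i))
  have hg_le : ∀ m : ℤ, ‖g m‖ ≤ Real.sqrt G2 := by
    intro m
    rw [show ‖g m‖ = Real.sqrt (‖g m‖ ^ 2) from (Real.sqrt_sq (norm_nonneg _)).symm]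
    exact Real.sqrt_le_sqrt (hg_sq_le m)
  have hgj_le : ∀ m : ℤ, |(m:ℝ)| * ‖g m‖ ≤ Real.sqrt G2 := by
    intro m
    have h1 : (|(m:ℝ)| * ‖g m‖) ^ 2 ≤ G2 := by
      have h2 : (|(m:ℝ)| * ‖g m‖) ^ 2 = (m:ℝ)^2 * ‖g m‖^2 := by
        rw [mul_pow, _root_.sq_abs ((m:ℝ))]
      have h3 : (m:ℝ)^2 * ‖g m‖^2 ≤ (1 + (m:ℝ)^2) * ‖g m‖^2 := by nlinarith [sq_nonneg (‖g m‖)]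
      have h4 : (1 + (m:ℝ)^2) * ‖g m‖^2 ≤ W (σ+2) (m:ℝ) * ‖g m‖^2 := by
        rw [← W_one]
        exact mul_le_mul_of_nonneg_right (W_mono _ _ _ (by linarith)) (sq_nonneg _)
      have h5 := Summable.le_tsum hb2 m (fun i _ => hbsq20 i)
      rw [h2]; calc (m:ℝ)^2 * ‖g m‖^2 ≤ (1 + (m:ℝ)^2) * ‖g m‖^2 := h3
        _ ≤ W (σ+2) (m:ℝ) * ‖g m‖^2 := h4
        _ ≤ G2 := h5
    rw [show |(m:ℝ)| * ‖g m‖ = Real.sqrt ((|(m:ℝ)| * ‖g m‖)^2) from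
      (Real.sqrt_sq (mul_nonneg (abs_nonneg _) (norm_nonneg _))).symm]
    exact Real.sqrt_le_sqrt h1
  -- norm of D1
  have hD1 : ∀ (c : FC) (m : ℤ), ‖FC.D1 c m‖ = |(m:ℝ)| * ‖c m‖ := by
    intro c m
    simp only [FC.D1, norm_mul, Complex.norm_I, one_mul]
    norm_cast
  -- slice summability
  have hA1 : ∀ k : ℤ, Summable (fun j => ξ j * FC.D1 g (k - j)) := by
    intro k
    apply Summable.of_norm_bounded (g := fun j => a j * Real.sqrt G2) (ha.mul_right _)
    intro j
    rw [norm_mul, hD1]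
    exact mul_le_mul (hξ_le j) (hgj_le (k - j)) (by positivity) (ha0 j)
  have hA2 : ∀ k : ℤ, Summable (fun j => FC.D1 ξ j * g (k - j)) := by
    intro k
    apply Summable.of_norm_bounded (g := fun j => a j * Real.sqrt G2) (ha.mul_right _)
    intro j
    rw [norm_mul, hD1]
    exact mul_le_mul (hξj_le j) (hg_le (k - j)) (norm_nonneg _) (ha0 j)
  -- the lie-derivative coefficient formula
  have hlie : ∀ k : ℤ, FC.lie ξ g k = ∑' j : ℤ, Complex.I * (k:ℂ) * (ξ j * g (k - j)) := by
    intro k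
    have h1 : FC.lie ξ g k = (∑' j, ξ j * FC.D1 g (k - j)) + ∑' j, FC.D1 ξ j * g (k - j) := rfl
    rw [h1, ← Summable.tsum_add (hA1 k) (hA2 k)]
    apply tsum_congr
    intro j
    simp only [FC.D1]
    push_cast
    ring
  -- the double sum
  set t : ℤ × ℤ → ℂ := fun p =>
    ((W σ (p.1:ℝ) : ℝ) : ℂ) * ((Complex.I * (p.1:ℂ) * (ξ p.2 * g (p.1 - p.2))) *
      (starRingEnd ℂ) (g p.1)) with ht_def
  have hnorm_t : ∀ p : ℤ × ℤ, ‖t p‖ =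
      W σ (p.1:ℝ) * |(p.1:ℝ)| * ‖ξ p.2‖ * (‖g (p.1 - p.2)‖ * ‖g p.1‖) := by
    intro p
    simp only [ht_def, norm_mul, Complex.norm_I, one_mul, Complex.norm_real,
      Real.norm_eq_abs, starRingEnd_apply, norm_star]
    rw [_root_.abs_of_nonneg (W_nonneg _ _)]
    norm_cast
    ring
  -- domination of ‖t‖
  have hDt : ∀ p : ℤ × ℤ, ‖t p‖ ≤
      2 ^ (σ/2+1) * (a p.2 * ((bsq2 (p.1 - p.2) + bsq p.1) / 2)) := by
    intro p
    obtain ⟨k, j⟩ := p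
    rw [hnorm_t]
    have e1 : W σ (k:ℝ) * |(k:ℝ)| ≤ W (σ/2) (k:ℝ) * W (σ/2+1) (k:ℝ) := by
      have h1 : W σ (k:ℝ) = W (σ/2) (k:ℝ) * W (σ/2) (k:ℝ) := by rw [← W_add]; ring_nf
      have h2 : W (σ/2) (k:ℝ) * |(k:ℝ)| ≤ W (σ/2+1) (k:ℝ) := by
        calc W (σ/2) (k:ℝ) * |(k:ℝ)| ≤ W (σ/2) (k:ℝ) * W 1 (k:ℝ) :=
              mul_le_mul_of_nonneg_left (abs_le_W_one _) (W_nonneg _ _)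
          _ = W (σ/2+1) (k:ℝ) := by rw [← W_add]
      calc W σ (k:ℝ) * |(k:ℝ)| = W (σ/2) (k:ℝ) * (W (σ/2) (k:ℝ) * |(k:ℝ)|) := by
            rw [h1]; ring
        _ ≤ W (σ/2) (k:ℝ) * W (σ/2+1) (k:ℝ) :=
            mul_le_mul_of_nonneg_left h2 (W_nonneg _ _)
    have e2 : W (σ/2+1) (k:ℝ) ≤ 2 ^ (σ/2+1) * W (σ/2+1) (j:ℝ) * W (σ/2+1) ((k:ℝ) - (j:ℝ)) := by
      have := peetre (σ/2+1) (j:ℝ) ((k:ℝ) - (j:ℝ)) (by linarith)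
      rwa [show (j:ℝ) + ((k:ℝ) - (j:ℝ)) = (k:ℝ) by ring] at this
    have e3 : W (σ/2+1) (j:ℝ) ≤ W (2*s) (j:ℝ) := W_mono _ _ _ (by linarith)
    have e4 : W (σ/2+1) ((k - j : ℤ):ℝ) * ‖g (k - j)‖ * (W (σ/2) (k:ℝ) * ‖g k‖) ≤
        (bsq2 (k - j) + bsq k) / 2 := by
      have h5 := amgm2 (W (σ/2+1) ((k - j : ℤ):ℝ) * ‖g (k - j)‖) (W (σ/2) (k:ℝ) * ‖g k‖)
      have h6 : (W (σ/2+1) ((k - j : ℤ):ℝ) * ‖g (k - j)‖) ^ 2 = bsq2 (k - j) := by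
        rw [mul_pow, Wsq]
        simp only [hbsq2_def]
        congr 2
        ring
      have h7 : (W (σ/2) (k:ℝ) * ‖g k‖) ^ 2 = bsq k := by
        rw [mul_pow, Wsq]
        simp only [hbsq_def]
        congr 2
        ring
      calc W (σ/2+1) ((k - j : ℤ):ℝ) * ‖g (k - j)‖ * (W (σ/2) (k:ℝ) * ‖g k‖) ≤
          ((W (σ/2+1) ((k - j : ℤ):ℝ) * ‖g (k - j)‖) ^ 2 + (W (σ/2) (k:ℝ) * ‖g k‖) ^ 2) / 2 := h5
        _ = (bsq2 (k - j) + bsq k) / 2 := by rw [h6, h7]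
    have hcast : ((k - j : ℤ):ℝ) = (k:ℝ) - (j:ℝ) := by push_cast; ring
    have e5 : W σ (k:ℝ) * |(k:ℝ)| * ‖ξ j‖ * (‖g (k - j)‖ * ‖g k‖) ≤
        (W (σ/2) (k:ℝ) * (2 ^ (σ/2+1) * W (2*s) (j:ℝ) * W (σ/2+1) ((k - j:ℤ):ℝ))) * ‖ξ j‖ *
          (‖g (k - j)‖ * ‖g k‖) := by
      apply mul_le_mul_of_nonneg_right _ (mul_nonneg (norm_nonneg _) (norm_nonneg _))
      apply mul_le_mul_of_nonneg_right _ (norm_nonneg _)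
      calc W σ (k:ℝ) * |(k:ℝ)| ≤ W (σ/2) (k:ℝ) * W (σ/2+1) (k:ℝ) := e1
        _ ≤ W (σ/2) (k:ℝ) * (2 ^ (σ/2+1) * W (σ/2+1) (j:ℝ) * W (σ/2+1) ((k:ℝ) - (j:ℝ))) :=
            mul_le_mul_of_nonneg_left e2 (W_nonneg _ _)
        _ ≤ W (σ/2) (k:ℝ) * (2 ^ (σ/2+1) * W (2*s) (j:ℝ) * W (σ/2+1) ((k - j:ℤ):ℝ)) := by
            rw [hcast]
            apply mul_le_mul_of_nonneg_left _ (W_nonneg _ _)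
            apply mul_le_mul_of_nonneg_right _ (W_nonneg _ _)
            exact mul_le_mul_of_nonneg_left e3 (Real.rpow_nonneg (by norm_num) _)
    calc W σ (k:ℝ) * |(k:ℝ)| * ‖ξ j‖ * (‖g (k - j)‖ * ‖g k‖)
        ≤ (W (σ/2) (k:ℝ) * (2 ^ (σ/2+1) * W (2*s) (j:ℝ) * W (σ/2+1) ((k - j:ℤ):ℝ))) * ‖ξ j‖ *
          (‖g (k - j)‖ * ‖g k‖) := e5
      _ = 2 ^ (σ/2+1) * (a j *
          (W (σ/2+1) ((k - j:ℤ):ℝ) * ‖g (k - j)‖ * (W (σ/2) (k:ℝ) * ‖g k‖))) := by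
          simp only [ha_def]; ring
      _ ≤ 2 ^ (σ/2+1) * (a j * ((bsq2 (k - j) + bsq k) / 2)) := by
          apply mul_le_mul_of_nonneg_left _ (Real.rpow_nonneg (by norm_num) _)
          exact mul_le_mul_of_nonneg_left e4 (ha0 j)
  -- product summability helpers
  have hprod : ∀ (c : ℤ → ℝ), (∀ k, 0 ≤ c k) → Summable c →
      (Summable (fun p : ℤ × ℤ => a p.2 * c p.1) ∧
       Summable (fun p : ℤ × ℤ => a p.2 * c (p.1 - p.2)) ∧
       ∑' p : ℤ × ℤ, a p.2 * c p.1 = L * (∑' k, c k) ∧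
       ∑' p : ℤ × ℤ, a p.2 * c (p.1 - p.2) = L * (∑' k, c k)) := by
    intro c hc0 hc
    have h1 : Summable (fun p : ℤ × ℤ => c p.1 * a p.2) :=
      hc.mul_of_nonneg ha (fun k => hc0 k) (fun j => ha0 j)
    have h1' : Summable (fun p : ℤ × ℤ => a p.2 * c p.1) :=
      h1.congr (fun p => by ring)
    let e2 : ℤ × ℤ ≃ ℤ × ℤ :=
      ⟨fun p => (p.1 - p.2, p.2), fun p => (p.1 + p.2, p.2),
        fun p => by simp, fun p => by simp⟩
    have h2 : Summable (fun p : ℤ × ℤ => a p.2 * c (p.1 - p.2)) := by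
      have h := (e2.summable_iff (f := fun p : ℤ × ℤ => a p.2 * c p.1)).mpr h1'
      exact h.congr (fun p => rfl)
    have h3 : ∑' p : ℤ × ℤ, a p.2 * c p.1 = L * (∑' k, c k) := by
      rw [Summable.tsum_prod h1']
      have h5 : ∀ k : ℤ, ∑' j : ℤ, a j * c k = L * c k := by
        intro k; rw [tsum_mul_right]
      rw [tsum_congr h5, tsum_mul_left]
    have h4 : ∑' p : ℤ × ℤ, a p.2 * c (p.1 - p.2) = L * (∑' k, c k) := by
      have he := e2.tsum_eq (f := fun p : ℤ × ℤ => a p.2 * c p.1)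
      rw [← h3]
      exact he
    exact ⟨h1', h2, h3, h4⟩
  obtain ⟨hS1, hS1s, hT1, hT1s⟩ := hprod bsq hbsq0 hb
  obtain ⟨hS2, hS2s, hT2, hT2s⟩ := hprod bsq2 hbsq20 hb2
  -- summability of t
  have hDsum : Summable (fun p : ℤ × ℤ =>
      2 ^ (σ/2+1) * (a p.2 * ((bsq2 (p.1 - p.2) + bsq p.1) / 2))) := by
    apply Summable.mul_left
    exact ((hS2s.add hS1).div_const 2).congr (fun p => by ring)
  have ht : Summable t := Summable.of_norm_bounded hDsum hDt
  -- the inner product as a double sum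
  have hinner_eq : FC.hsInner σ (FC.lie ξ g) g = (∑' p : ℤ × ℤ, t p).re := by
    unfold FC.hsInner
    congr 1
    rw [Summable.tsum_prod ht]
    apply tsum_congr
    intro k
    rw [show FC.wt σ k = W σ (k:ℝ) from rfl, hlie k, ← tsum_mul_right, ← tsum_mul_left]
  -- the flip equiv
  let Phi : ℤ × ℤ ≃ ℤ × ℤ :=
    ⟨fun p => (p.1 - p.2, -p.2), fun p => (p.1 - p.2, -p.2),
      fun p => by obtain ⟨x, y⟩ := p; simp [Prod.ext_iff],
      fun p => by obtain ⟨x, y⟩ := p; simp [Prod.ext_iff]⟩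
  set tt : ℤ × ℤ → ℂ := fun p => (starRingEnd ℂ) (t (Phi p)) with htt_def
  have htt : Summable tt := by
    have h1 : Summable (fun p => t (Phi p)) := (Phi.summable_iff (f := t)).mpr ht
    exact h1.star
  have htsum_tt : ∑' p : ℤ × ℤ, tt p = (starRingEnd ℂ) (∑' p : ℤ × ℤ, t p) := by
    rw [starRingEnd_apply, tsum_star]
    exact Phi.tsum_eq (fun p => star (t p))
  -- pointwise sum formula
  have hadd : ∀ p : ℤ × ℤ, t p + tt p =
      Complex.I * (((phi σ (p.1:ℝ) - phi σ ((p.1:ℝ) - (p.2:ℝ))) : ℝ) : ℂ) *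
        (ξ p.2 * g (p.1 - p.2) * (starRingEnd ℂ) (g p.1)) := by
    intro p
    obtain ⟨k, j⟩ := p
    have hPhi : Phi (k, j) = (k - j, -j) := rfl
    have hξj : ξ (-j) = (starRingEnd ℂ) (ξ j) := hξr j
    simp only [htt_def, ht_def, hPhi]
    rw [show (k - j) - (-j) = k from by ring]
    rw [hξj]
    simp only [map_mul, map_intCast, Complex.conj_conj, Complex.conj_ofReal, Complex.conj_I]
    simp only [phi]
    push_cast
    ring
  -- pointwise norm bound on t + tt
  have hcast2 : ∀ k j : ℤ, ((k - j : ℤ):ℝ) = (k:ℝ) - (j:ℝ) := by intro k j; push_cast; ring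
  have hDsum2 : ∀ p : ℤ × ℤ, ‖t p + tt p‖ ≤
      Cphi * (a p.2 * ((bsq (p.1 - p.2) + bsq p.1) / 2)) := by
    intro p
    obtain ⟨k, j⟩ := p
    rw [hadd (k, j)]
    rw [norm_mul, norm_mul, Complex.norm_I, one_mul, Complex.norm_real, Real.norm_eq_abs,
      norm_mul, norm_mul, starRingEnd_apply, norm_star]
    have hphi := phi_diff σ ((k:ℝ) - (j:ℝ)) (k:ℝ) hσ2
    rw [show (k:ℝ) - ((k:ℝ) - (j:ℝ)) = (j:ℝ) from by ring] at hphi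
    have hB0 : (0:ℝ) ≤ ‖ξ j‖ * ‖g (k - j)‖ * ‖g k‖ := by positivity
    have step1 : |phi σ (k:ℝ) - phi σ ((k:ℝ) - (j:ℝ))| * (‖ξ j‖ * ‖g (k - j)‖ * ‖g k‖) ≤
        ((2*σ+1) * 2^(2*σ) * W (2*σ) ((j:ℝ)) * (W (σ/2) ((k:ℝ) - (j:ℝ)) * W (σ/2) (k:ℝ))) *
          (‖ξ j‖ * ‖g (k - j)‖ * ‖g k‖) :=
      mul_le_mul_of_nonneg_right hphi hB0
    have step2 : ((2*σ+1) * 2^(2*σ) * W (2*σ) ((j:ℝ)) * (W (σ/2) ((k:ℝ) - (j:ℝ)) * W (σ/2) (k:ℝ))) *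
          (‖ξ j‖ * ‖g (k - j)‖ * ‖g k‖) =
        Cphi * ((W (2*σ) (j:ℝ) * ‖ξ j‖) *
          ((W (σ/2) ((k - j:ℤ):ℝ) * ‖g (k - j)‖) * (W (σ/2) (k:ℝ) * ‖g k‖))) := by
      rw [hcast2 k j, hCphi]; ring
    have step3 : W (2*σ) (j:ℝ) * ‖ξ j‖ ≤ a j :=
      mul_le_mul_of_nonneg_right (W_mono _ _ _ (by linarith)) (norm_nonneg _)
    have step4 : (W (σ/2) ((k - j:ℤ):ℝ) * ‖g (k - j)‖) * (W (σ/2) (k:ℝ) * ‖g k‖) ≤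
        (bsq (k - j) + bsq k) / 2 := by
      have h5 := amgm2 (W (σ/2) ((k - j:ℤ):ℝ) * ‖g (k - j)‖) (W (σ/2) (k:ℝ) * ‖g k‖)
      have h6 : (W (σ/2) ((k - j:ℤ):ℝ) * ‖g (k - j)‖) ^ 2 = bsq (k - j) := by
        rw [mul_pow, Wsq]
        simp only [hbsq_def]
        congr 2
        ring
      have h7 : (W (σ/2) (k:ℝ) * ‖g k‖) ^ 2 = bsq k := by
        rw [mul_pow, Wsq]
        simp only [hbsq_def]
        congr 2
        ring
      rw [h6, h7] at h5
      exact h5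
    have hC0 : (0:ℝ) ≤ Cphi := by
      rw [hCphi]
      exact mul_nonneg (by linarith) (Real.rpow_nonneg (by norm_num) _)
    have hq10 : (0:ℝ) ≤ W (2*σ) (j:ℝ) * ‖ξ j‖ := mul_nonneg (W_nonneg _ _) (norm_nonneg _)
    have hq20 : (0:ℝ) ≤ (W (σ/2) ((k - j:ℤ):ℝ) * ‖g (k - j)‖) * (W (σ/2) (k:ℝ) * ‖g k‖) := by
      have := W_nonneg (σ/2) ((k - j:ℤ):ℝ); have := W_nonneg (σ/2) (k:ℝ); positivity
    calc |phi σ (k:ℝ) - phi σ ((k:ℝ) - (j:ℝ))| * (‖ξ j‖ * ‖g (k - j)‖ * ‖g k‖)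
        ≤ ((2*σ+1) * 2^(2*σ) * W (2*σ) ((j:ℝ)) * (W (σ/2) ((k:ℝ) - (j:ℝ)) * W (σ/2) (k:ℝ))) *
          (‖ξ j‖ * ‖g (k - j)‖ * ‖g k‖) := step1
      _ = Cphi * ((W (2*σ) (j:ℝ) * ‖ξ j‖) *
          ((W (σ/2) ((k - j:ℤ):ℝ) * ‖g (k - j)‖) * (W (σ/2) (k:ℝ) * ‖g k‖))) := step2
      _ ≤ Cphi * (a j * ((bsq (k - j) + bsq k) / 2)) := by
          apply mul_le_mul_of_nonneg_left _ hC0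
          exact mul_le_mul step3 step4 hq20 (ha0 j)
  -- summability of the norms
  have hsum_norm : Summable (fun p : ℤ × ℤ => ‖t p + tt p‖) := by
    apply Summable.of_nonneg_of_le (fun p => norm_nonneg _) hDsum2
    apply Summable.mul_left
    exact ((hS1s.add hS1).div_const 2).congr (fun p => by ring)
  have hDsum2s : Summable (fun p : ℤ × ℤ => Cphi * (a p.2 * ((bsq (p.1 - p.2) + bsq p.1) / 2))) := by
    apply Summable.mul_left
    exact ((hS1s.add hS1).div_const 2).congr (fun p => by ring)
  have htsum_norm : ∑' p : ℤ × ℤ, Cphi * (a p.2 * ((bsq (p.1 - p.2) + bsq p.1) / 2)) =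
      Cphi * (L * G) := by
    rw [tsum_mul_left]
    congr 1
    have h1 : ∀ p : ℤ × ℤ, a p.2 * ((bsq (p.1 - p.2) + bsq p.1)/2) =
        (a p.2 * bsq (p.1 - p.2) + a p.2 * bsq p.1)/2 := fun p => by ring
    rw [tsum_congr h1, tsum_div_const, Summable.tsum_add hS1s hS1, hT1s, hT1]
    ring
  -- conclude
  have hre : 2 * FC.hsInner σ (FC.lie ξ g) g = (∑' p : ℤ × ℤ, (t p + tt p)).re := by
    rw [Summable.tsum_add ht htt, Complex.add_re, htsum_tt, Complex.conj_re, hinner_eq]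
    ring
  have habs : |2 * FC.hsInner σ (FC.lie ξ g) g| ≤ Cphi * (L * G) := by
    rw [hre]
    calc |(∑' p : ℤ × ℤ, (t p + tt p)).re| ≤ ‖∑' p : ℤ × ℤ, (t p + tt p)‖ :=
          Complex.abs_re_le_norm _
      _ ≤ ∑' p : ℤ × ℤ, ‖t p + tt p‖ := norm_tsum_le_tsum_norm hsum_norm
      _ ≤ ∑' p : ℤ × ℤ, Cphi * (a p.2 * ((bsq (p.1 - p.2) + bsq p.1) / 2)) :=
          Summable.tsum_le_tsum hDsum2 hsum_norm hDsum2s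
      _ = Cphi * (L * G) := htsum_norm
  rw [abs_mul, _root_.abs_two] at habs
  have hfin : |FC.hsInner σ (FC.lie ξ g) g| ≤ Cphi * (L * G) := by
    have := abs_nonneg (FC.hsInner σ (FC.lie ξ g) g)
    linarith
  calc |FC.hsInner σ (FC.lie ξ g) g| ≤ Cphi * (L * G) := hfin
    _ = Cphi * L * G := by ring



lemma jh_bound (jhat : SchwartzMap ℝ ℝ) (hj0 : ∀ x, 0 ≤ jhat x) (hj1 : ∀ x, jhat x ≤ 1) :
    ∃ Cj > (0:ℝ), ∀ x : ℝ, (1 + x ^ 2) ^ (2:ℕ) * jhat x ≤ Cj := by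
  obtain ⟨C, hC0, hC⟩ := jhat.decay 4 0
  refine ⟨4 * C + 5, by linarith, ?_⟩
  intro x
  have h1 : ‖x‖ ^ 4 * ‖iteratedFDeriv ℝ 0 (⇑jhat) x‖ ≤ C := hC x
  rw [norm_iteratedFDeriv_zero] at h1
  have h2 : x ^ 4 * jhat x ≤ C := by
    have hax : ‖x‖ ^ 4 = x ^ 4 := by
      rw [Real.norm_eq_abs, show (4:ℕ) = 2 * 2 from rfl, pow_mul, _root_.sq_abs, ← pow_mul]
    rw [hax, Real.norm_eq_abs, _root_.abs_of_nonneg (hj0 x)] at h1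
    exact h1
  nlinarith [hj0 x, hj1 x, sq_nonneg x, sq_nonneg (x^2 - 1),
    mul_nonneg (sq_nonneg (x^2 - 1)) (hj0 x)]

lemma mol_bound (jh : ℝ → ℝ) (hj0 : ∀ x, 0 ≤ jh x) (Cj : ℝ)
    (hCj : ∀ x, (1 + x ^ 2) ^ (2:ℕ) * jh x ≤ Cj) (ε : ℝ) (hε : 0 < ε) (hε1 : ε ≤ 1) (x : ℝ) :
    (1 + x ^ 2) * jh (ε * x) ≤ Cj / ε ^ 2 := by
  rw [le_div_iff₀ (by positivity : (0:ℝ) < ε ^ 2)]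
  have h1 : ε ^ 2 * (1 + x ^ 2) ≤ 1 + (ε * x) ^ 2 := by nlinarith [sq_nonneg x]
  have h3 : (1 + (ε * x) ^ 2) * jh (ε * x) ≤ (1 + (ε * x) ^ 2) ^ (2:ℕ) * jh (ε * x) := by
    apply mul_le_mul_of_nonneg_right _ (hj0 _)
    nlinarith [sq_nonneg (ε * x)]
  calc (1 + x ^ 2) * jh (ε * x) * ε ^ 2 = (ε ^ 2 * (1 + x ^ 2)) * jh (ε * x) := by ring
    _ ≤ (1 + (ε * x) ^ 2) * jh (ε * x) := mul_le_mul_of_nonneg_right h1 (hj0 _)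
    _ ≤ (1 + (ε * x) ^ 2) ^ (2:ℕ) * jh (ε * x) := h3
    _ ≤ Cj := hCj (ε * x)


end S16


set_option maxHeartbeats 2000000 in
/-- Let `s > 11/2`, `Σ_k ‖ξ_k‖_{H^σ} < ∞` for all `σ ≥ 0`, and let `j` be a
fixed Schwartz mollifier (`ĵ` Schwartz, `0 ≤ ĵ ≤ 1`, `ĵ = 1` on `[-1,1]`).  Then there is
`C > 0`, independent of `ε`, such that for all `ε ∈ (0,1)` and `X = (u,η) ∈ H^s × H^{s-1}`:
`Σ_k |(h_ε^k(X), X)_{H^s×H^{s-1}}|² ≤ C (‖u‖²_{H^s} + ‖η‖²_{H^{s-1}})²`. -/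
theorem statement16 (s : ℝ) (hs : 11 / 2 < s) (ξ : ℕ → FC)
    (hξmem : ∀ σ : ℝ, 0 ≤ σ → ∀ k : ℕ, FC.memHs σ (ξ k))
    (hξreal : ∀ k : ℕ, FC.isReal (ξ k))
    (hξsum : ∀ σ : ℝ, 0 ≤ σ → Summable fun k : ℕ => FC.hsNorm σ (ξ k))
    (jhat : SchwartzMap ℝ ℝ)
    (hj0 : ∀ x : ℝ, 0 ≤ jhat x) (hj1 : ∀ x : ℝ, jhat x ≤ 1)
    (hjone : ∀ x : ℝ, |x| ≤ 1 → jhat x = 1) :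
    ∃ C > (0 : ℝ), ∀ ε : ℝ, ε ∈ Set.Ioo (0 : ℝ) 1 → ∀ u η : FC,
      FC.memHs s u → FC.memHs (s - 1) η → FC.isReal u → FC.isReal η →
      Summable (fun k : ℕ =>
        |FC.pairInner s (s - 1) (hMol1 (⇑jhat) ε ξ k u) (hMol2 (⇑jhat) ε ξ k η) u η| ^ 2) ∧
      ∑' k : ℕ,
          |FC.pairInner s (s - 1) (hMol1 (⇑jhat) ε ξ k u) (hMol2 (⇑jhat) ε ξ k η) u η| ^ 2
        ≤ C * (FC.hsNorm s u ^ 2 + FC.hsNorm (s - 1) η ^ 2) ^ 2 := by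
  obtain ⟨K₁, hK₁, hcore₁⟩ := S16.core s (s-2) (by linarith) (by linarith)
  obtain ⟨K₂, hK₂, hcore₂⟩ := S16.core s (s-1) (by linarith) (by linarith)
  obtain ⟨Cj, hCj0, hCj⟩ := S16.jh_bound jhat hj0 hj1
  set X : ℝ := ∑' j : ℤ, S16.W (-1) (j:ℝ) with hX
  have hX0 : 0 ≤ Real.sqrt X := Real.sqrt_nonneg _
  set M : ℕ → ℝ := fun k => Real.sqrt X * FC.hsNorm (4*s+1) (ξ k) with hM
  have hMsum : Summable M := (hξsum (4*s+1) (by linarith)).mul_left _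
  have hM0 : ∀ k, 0 ≤ M k := fun k => mul_nonneg hX0 (Real.sqrt_nonneg _)
  set SM : ℝ := ∑' k, M k with hSM
  have hSM0 : 0 ≤ SM := tsum_nonneg hM0
  refine ⟨(K₁+K₂)^2 * SM^2 + 1, by positivity, ?_⟩
  intro ε hε u η hu hη hur hηr
  obtain ⟨hε0, hε1⟩ := hε
  -- per-k ℓ¹ bounds on ξ k
  have hxi : ∀ k : ℕ, Summable (fun j : ℤ => S16.W (2*s) (j:ℝ) * ‖ξ k j‖) ∧
      (∑' j : ℤ, S16.W (2*s) (j:ℝ) * ‖ξ k j‖) ≤ M k := by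
    intro k
    have hmem : Summable (fun j : ℤ => S16.W (4*s+1) (j:ℝ) * ‖ξ k j‖^2) :=
      hξmem (4*s+1) (by linarith) k
    have hkey : ∀ j : ℤ, S16.W (2*s) (j:ℝ) * ‖ξ k j‖ =
        Real.sqrt (S16.W (-1) (j:ℝ) * (S16.W (4*s+1) (j:ℝ) * ‖ξ k j‖^2)) := by
      intro j
      have h6 : (S16.W (2*s) (j:ℝ) * ‖ξ k j‖)^2 =
          S16.W (-1) (j:ℝ) * (S16.W (4*s+1) (j:ℝ) * ‖ξ k j‖^2) := by
        rw [mul_pow, S16.Wsq, show 2*(2*s) = -1 + (4*s+1) from by ring, S16.W_add]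
        ring
      rw [← h6]
      exact (Real.sqrt_sq (mul_nonneg (S16.W_nonneg _ _) (norm_nonneg _))).symm
    obtain ⟨hs1, hs2⟩ := S16.tsum_cs (fun j => S16.W (-1) (j:ℝ))
      (fun j => S16.W (4*s+1) (j:ℝ) * ‖ξ k j‖^2)
      (fun j => S16.W_nonneg _ _) (fun j => mul_nonneg (S16.W_nonneg _ _) (sq_nonneg _))
      S16.summable_invW hmem
    constructor
    · exact hs1.congr (fun j => (hkey j).symm)
    · rw [tsum_congr hkey]
      exact hs2
  -- the mollified functions
  set g1 : FC := FC.helm (FC.Jmol (⇑jhat) ε u) with hg1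
  set g2 : FC := FC.Jmol (⇑jhat) ε η with hg2
  have hg1n : ∀ n : ℤ, ‖g1 n‖ = (1+(n:ℝ)^2) * jhat (ε*(n:ℝ)) * ‖u n‖ := by
    intro n
    show ‖(((1+(n:ℝ)^2 : ℝ)):ℂ) * ((((jhat (ε*(n:ℝ))) : ℝ):ℂ) * u n)‖ = _
    rw [norm_mul, norm_mul, Complex.norm_real, Complex.norm_real, Real.norm_eq_abs,
      Real.norm_eq_abs, _root_.abs_of_nonneg (hj0 _),
      _root_.abs_of_nonneg (by positivity : (0:ℝ) ≤ 1+(n:ℝ)^2)]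
    ring
  have hg2n : ∀ n : ℤ, ‖g2 n‖ = jhat (ε*(n:ℝ)) * ‖η n‖ := by
    intro n
    show ‖((((jhat (ε*(n:ℝ))) : ℝ):ℂ) * η n)‖ = _
    rw [norm_mul, Complex.norm_real, Real.norm_eq_abs, _root_.abs_of_nonneg (hj0 _)]
  have hj1' : ∀ x, jhat x ^ 2 ≤ 1 := fun x => by nlinarith [hj0 x, hj1 x]
  -- membership bounds for g1
  have hb1 : ∀ n : ℤ, S16.W (s-2) (n:ℝ) * ‖g1 n‖^2 ≤ FC.wt s n * ‖u n‖^2 := by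
    intro n
    rw [hg1n n]
    have h1 : S16.W (s-2) (n:ℝ) * ((1+(n:ℝ)^2) * jhat (ε*(n:ℝ)) * ‖u n‖)^2
        = S16.W s (n:ℝ) * (jhat (ε*(n:ℝ))^2 * ‖u n‖^2) := by
      rw [show ((1+(n:ℝ)^2) * jhat (ε*(n:ℝ)) * ‖u n‖)^2 =
          (1+(n:ℝ)^2)^2 * (jhat (ε*(n:ℝ))^2 * ‖u n‖^2) from by ring,
        ← S16.W_one (n:ℝ), S16.Wsq, ← mul_assoc, ← S16.W_add,
        show s-2+2*1 = s from by ring]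
    rw [h1]
    have h2 : jhat (ε*(n:ℝ))^2 * ‖u n‖^2 ≤ ‖u n‖^2 := by
      nlinarith [sq_nonneg (‖u n‖), hj1' (ε*(n:ℝ)), sq_nonneg (jhat (ε*(n:ℝ)))]
    exact mul_le_mul_of_nonneg_left h2 (S16.W_nonneg _ _)
  have hg1mem : Summable (fun n : ℤ => S16.W (s-2) (n:ℝ) * ‖g1 n‖^2) :=
    Summable.of_nonneg_of_le (fun n => mul_nonneg (S16.W_nonneg _ _) (sq_nonneg _)) hb1 hu
  have hG1le : ∑' n : ℤ, S16.W (s-2) (n:ℝ) * ‖g1 n‖^2 ≤ ∑' n : ℤ, FC.wt s n * ‖u n‖^2 :=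
    Summable.tsum_le_tsum hb1 hg1mem hu
  have hmol : ∀ x : ℝ, (1 + x^2) * jhat (ε*x) ≤ Cj / ε^2 :=
    S16.mol_bound (⇑jhat) hj0 Cj hCj ε hε0 (le_of_lt hε1)
  have hg1mem2 : Summable (fun n : ℤ => S16.W (s-2+2) (n:ℝ) * ‖g1 n‖^2) := by
    apply Summable.of_nonneg_of_le (fun n => mul_nonneg (S16.W_nonneg _ _) (sq_nonneg _))
      _ (hu.mul_left ((Cj/ε^2)^2))
    intro n
    rw [hg1n n]
    have h1 : ((1+(n:ℝ)^2) * jhat (ε*(n:ℝ)))^2 ≤ (Cj/ε^2)^2 := by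
      have h2 : (0:ℝ) ≤ (1+(n:ℝ)^2) * jhat (ε*(n:ℝ)) := mul_nonneg (by positivity) (hj0 _)
      nlinarith [hmol (n:ℝ)]
    have h3 : S16.W (s-2+2) (n:ℝ) = S16.W s (n:ℝ) := by rw [show s-2+2 = s from by ring]
    rw [h3, show ((1+(n:ℝ)^2) * jhat (ε*(n:ℝ)) * ‖u n‖)^2 =
        ((1+(n:ℝ)^2) * jhat (ε*(n:ℝ)))^2 * ‖u n‖^2 from by ring]
    calc S16.W s (n:ℝ) * (((1+(n:ℝ)^2) * jhat (ε*(n:ℝ)))^2 * ‖u n‖^2)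
        ≤ S16.W s (n:ℝ) * ((Cj/ε^2)^2 * ‖u n‖^2) := by
          apply mul_le_mul_of_nonneg_left _ (S16.W_nonneg _ _)
          exact mul_le_mul_of_nonneg_right h1 (sq_nonneg _)
      _ = (Cj/ε^2)^2 * (FC.wt s n * ‖u n‖^2) := by
          rw [show FC.wt s n = S16.W s (n:ℝ) from rfl]; ring
  -- membership bounds for g2
  have hb2' : ∀ n : ℤ, S16.W (s-1) (n:ℝ) * ‖g2 n‖^2 ≤ FC.wt (s-1) n * ‖η n‖^2 := by
    intro n
    rw [hg2n n]
    rw [show (jhat (ε*(n:ℝ)) * ‖η n‖)^2 = jhat (ε*(n:ℝ))^2 * ‖η n‖^2 from by ring]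
    have h2 : jhat (ε*(n:ℝ))^2 * ‖η n‖^2 ≤ ‖η n‖^2 := by
      nlinarith [sq_nonneg (‖η n‖), hj1' (ε*(n:ℝ))]
    exact mul_le_mul_of_nonneg_left h2 (S16.W_nonneg _ _)
  have hg2mem : Summable (fun n : ℤ => S16.W (s-1) (n:ℝ) * ‖g2 n‖^2) :=
    Summable.of_nonneg_of_le (fun n => mul_nonneg (S16.W_nonneg _ _) (sq_nonneg _)) hb2' hη
  have hG2le : ∑' n : ℤ, S16.W (s-1) (n:ℝ) * ‖g2 n‖^2 ≤ ∑' n : ℤ, FC.wt (s-1) n * ‖η n‖^2 :=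
    Summable.tsum_le_tsum hb2' hg2mem hη
  have hg2mem2 : Summable (fun n : ℤ => S16.W (s-1+2) (n:ℝ) * ‖g2 n‖^2) := by
    apply Summable.of_nonneg_of_le (fun n => mul_nonneg (S16.W_nonneg _ _) (sq_nonneg _))
      _ (hη.mul_left ((Cj/ε^2)^2))
    intro n
    rw [hg2n n]
    have h1 : ((1+(n:ℝ)^2) * jhat (ε*(n:ℝ)))^2 ≤ (Cj/ε^2)^2 := by
      have h2 : (0:ℝ) ≤ (1+(n:ℝ)^2) * jhat (ε*(n:ℝ)) := mul_nonneg (by positivity) (hj0 _)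
      nlinarith [hmol (n:ℝ)]
    have h3 : S16.W (s-1+2) (n:ℝ) = S16.W (s-1) (n:ℝ) * (1+(n:ℝ)^2)^2 := by
      rw [← S16.W_one (n:ℝ), S16.Wsq, ← S16.W_add, show s-1+2*1 = s-1+2 from by ring]
    rw [h3]
    calc S16.W (s-1) (n:ℝ) * (1+(n:ℝ)^2)^2 * (jhat (ε*(n:ℝ)) * ‖η n‖)^2
        = S16.W (s-1) (n:ℝ) * (((1+(n:ℝ)^2) * jhat (ε*(n:ℝ)))^2 * ‖η n‖^2) := by ring
      _ ≤ S16.W (s-1) (n:ℝ) * ((Cj/ε^2)^2 * ‖η n‖^2) := by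
          apply mul_le_mul_of_nonneg_left _ (S16.W_nonneg _ _)
          exact mul_le_mul_of_nonneg_right h1 (sq_nonneg _)
      _ = (Cj/ε^2)^2 * (FC.wt (s-1) n * ‖η n‖^2) := by
          rw [show FC.wt (s-1) n = S16.W (s-1) (n:ℝ) from rfl]; ring
  -- reduction identities
  have hred1 : ∀ k : ℕ, FC.hsInner s (hMol1 (⇑jhat) ε ξ k u) u =
      - FC.hsInner (s-2) (FC.lie (ξ k) g1) g1 := by
    intro k
    unfold FC.hsInner
    rw [← Complex.neg_re, ← tsum_neg]
    congr 1
    apply tsum_congr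
    intro n
    have hW2 : S16.W (s-2) (n:ℝ) * (1+(n:ℝ)^2)^2 = S16.W s (n:ℝ) := by
      rw [← S16.W_one (n:ℝ), S16.Wsq, ← S16.W_add, show s-2+2*1 = s from by ring]
    have hne : (1+(n:ℝ)^2) ≠ 0 := by positivity
    have hreal : FC.wt s n * (1+(n:ℝ)^2)⁻¹ = FC.wt (s-2) n * (1+(n:ℝ)^2) := by
      rw [show FC.wt s n = S16.W s (n:ℝ) from rfl,
        show FC.wt (s-2) n = S16.W (s-2) (n:ℝ) from rfl, ← hW2]
      field_simp
    have hrealC : ((FC.wt s n : ℝ):ℂ) * (((1+(n:ℝ)^2)⁻¹ : ℝ):ℂ) =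
        ((FC.wt (s-2) n : ℝ):ℂ) * (((1+(n:ℝ)^2) : ℝ):ℂ) := by
      rw [← Complex.ofReal_mul, ← Complex.ofReal_mul, hreal]
    have hMn : hMol1 (⇑jhat) ε ξ k u n =
        -((((jhat (ε*(n:ℝ))):ℝ):ℂ) * ((((1+(n:ℝ)^2)⁻¹ : ℝ)):ℂ) * FC.lie (ξ k) g1 n) := by
      show -((((jhat (ε * (n:ℝ)) : ℝ)):ℂ) * (((((1+(n:ℝ)^2)⁻¹ : ℝ)):ℂ) * FC.lie (ξ k) g1 n)) = _
      ring
    have hGn : (starRingEnd ℂ) (g1 n) =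
        (((1+(n:ℝ)^2) : ℝ):ℂ) * ((((jhat (ε*(n:ℝ))) : ℝ)):ℂ) * (starRingEnd ℂ) (u n) := by
      show (starRingEnd ℂ) ((((1+(n:ℝ)^2):ℝ):ℂ) * ((((jhat (ε * (n:ℝ))):ℝ):ℂ) * u n)) = _
      rw [map_mul, map_mul, Complex.conj_ofReal, Complex.conj_ofReal]
      ring
    rw [hMn, hGn]
    linear_combination (-(((jhat (ε*(n:ℝ)):ℝ)):ℂ) *
      (FC.lie (ξ k) g1 n * (starRingEnd ℂ) (u n))) * hrealC
  have hred2 : ∀ k : ℕ, FC.hsInner (s-1) (hMol2 (⇑jhat) ε ξ k η) η =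
      - FC.hsInner (s-1) (FC.lie (ξ k) g2) g2 := by
    intro k
    unfold FC.hsInner
    rw [← Complex.neg_re, ← tsum_neg]
    congr 1
    apply tsum_congr
    intro n
    have hMn : hMol2 (⇑jhat) ε ξ k η n =
        -((((jhat (ε*(n:ℝ))):ℝ):ℂ) * FC.lie (ξ k) g2 n) := by
      show -(((jhat (ε * (n:ℝ)) : ℝ):ℂ) * FC.lie (ξ k) g2 n) = _
      ring
    have hGn : (starRingEnd ℂ) (g2 n) =
        ((((jhat (ε*(n:ℝ))) : ℝ)):ℂ) * (starRingEnd ℂ) (η n) := by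
      show (starRingEnd ℂ) (((((jhat (ε * (n:ℝ))):ℝ)):ℂ) * η n) = _
      rw [map_mul, Complex.conj_ofReal]
    rw [hMn, hGn]
    ring
  -- collect
  set U : ℝ := ∑' n : ℤ, FC.wt s n * ‖u n‖^2 with hU
  set E : ℝ := ∑' n : ℤ, FC.wt (s-1) n * ‖η n‖^2 with hE
  have hU0 : 0 ≤ U := tsum_nonneg (fun n => mul_nonneg (S16.W_nonneg _ _) (sq_nonneg _))
  have hE0 : 0 ≤ E := tsum_nonneg (fun n => mul_nonneg (S16.W_nonneg _ _) (sq_nonneg _))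
  have hPk : ∀ k : ℕ,
      |FC.pairInner s (s-1) (hMol1 (⇑jhat) ε ξ k u) (hMol2 (⇑jhat) ε ξ k η) u η|
        ≤ (K₁+K₂) * M k * (U + E) := by
    intro k
    obtain ⟨hxis, hxile⟩ := hxi k
    have h1 := hcore₁ (ξ k) g1 (hξreal k) hxis hg1mem hg1mem2
    have h2 := hcore₂ (ξ k) g2 (hξreal k) hxis hg2mem hg2mem2
    have hΛ0 : 0 ≤ ∑' j : ℤ, S16.W (2*s) (j:ℝ) * ‖ξ k j‖ :=
      tsum_nonneg (fun j => mul_nonneg (S16.W_nonneg _ _) (norm_nonneg _))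
    have hG10 : 0 ≤ ∑' n : ℤ, S16.W (s-2) (n:ℝ) * ‖g1 n‖^2 :=
      tsum_nonneg (fun n => mul_nonneg (S16.W_nonneg _ _) (sq_nonneg _))
    have hG20 : 0 ≤ ∑' n : ℤ, S16.W (s-1) (n:ℝ) * ‖g2 n‖^2 :=
      tsum_nonneg (fun n => mul_nonneg (S16.W_nonneg _ _) (sq_nonneg _))
    have hb1' : |FC.hsInner (s-2) (FC.lie (ξ k) g1) g1| ≤ K₁ * M k * (U + E) := by
      refine h1.trans ?_
      have e1 : K₁ * (∑' j : ℤ, S16.W (2*s) (j:ℝ) * ‖ξ k j‖) *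
          (∑' n : ℤ, S16.W (s-2) (n:ℝ) * ‖g1 n‖^2) ≤ K₁ * M k * (U + E) := by
        apply mul_le_mul
        · exact mul_le_mul_of_nonneg_left hxile hK₁.le
        · exact hG1le.trans (by linarith)
        · exact hG10
        · exact mul_nonneg hK₁.le (hM0 k)
      exact e1
    have hb2'' : |FC.hsInner (s-1) (FC.lie (ξ k) g2) g2| ≤ K₂ * M k * (U + E) := by
      refine h2.trans ?_
      apply mul_le_mul
      · exact mul_le_mul_of_nonneg_left hxile hK₂.le
      · exact hG2le.trans (by linarith)
      · exact hG20
      · exact mul_nonneg hK₂.le (hM0 k)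
    have hpair : FC.pairInner s (s-1) (hMol1 (⇑jhat) ε ξ k u) (hMol2 (⇑jhat) ε ξ k η) u η =
        (- FC.hsInner (s-2) (FC.lie (ξ k) g1) g1) + (- FC.hsInner (s-1) (FC.lie (ξ k) g2) g2) := by
      rw [show FC.pairInner s (s-1) (hMol1 (⇑jhat) ε ξ k u) (hMol2 (⇑jhat) ε ξ k η) u η =
        FC.hsInner s (hMol1 (⇑jhat) ε ξ k u) u + FC.hsInner (s-1) (hMol2 (⇑jhat) ε ξ k η) η from rfl,
        hred1 k, hred2 k]
    rw [hpair]
    calc |(- FC.hsInner (s-2) (FC.lie (ξ k) g1) g1) + (- FC.hsInner (s-1) (FC.lie (ξ k) g2) g2)|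
        ≤ |FC.hsInner (s-2) (FC.lie (ξ k) g1) g1| + |FC.hsInner (s-1) (FC.lie (ξ k) g2) g2| := by
          rw [← abs_neg (FC.hsInner (s-2) (FC.lie (ξ k) g1) g1),
            ← abs_neg (FC.hsInner (s-1) (FC.lie (ξ k) g2) g2)]
          exact abs_add_le _ _
      _ ≤ K₁ * M k * (U + E) + K₂ * M k * (U + E) := add_le_add hb1' hb2''
      _ = (K₁+K₂) * M k * (U + E) := by ring
  -- square and sum
  have hMle : ∀ k, M k ≤ SM := fun k => Summable.le_tsum hMsum k (fun i _ => hM0 i)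
  have hPsq : ∀ k : ℕ,
      |FC.pairInner s (s-1) (hMol1 (⇑jhat) ε ξ k u) (hMol2 (⇑jhat) ε ξ k η) u η| ^ 2
        ≤ ((K₁+K₂) * (U+E))^2 * SM * M k := by
    intro k
    have h1 := hPk k
    have h2 : |FC.pairInner s (s-1) (hMol1 (⇑jhat) ε ξ k u) (hMol2 (⇑jhat) ε ξ k η) u η| ^ 2
        ≤ ((K₁+K₂) * M k * (U + E))^2 := by
      have := abs_nonneg (FC.pairInner s (s-1) (hMol1 (⇑jhat) ε ξ k u) (hMol2 (⇑jhat) ε ξ k η) u η)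
      nlinarith [h1]
    refine h2.trans ?_
    have h3 : ((K₁+K₂) * M k * (U + E))^2 = ((K₁+K₂) * (U+E))^2 * (M k * M k) := by ring
    rw [h3]
    have h4 : M k * M k ≤ SM * M k := mul_le_mul_of_nonneg_right (hMle k) (hM0 k)
    nlinarith [sq_nonneg ((K₁+K₂) * (U+E)), h4]
  have hsummable : Summable (fun k : ℕ =>
      |FC.pairInner s (s-1) (hMol1 (⇑jhat) ε ξ k u) (hMol2 (⇑jhat) ε ξ k η) u η| ^ 2) := by
    apply Summable.of_nonneg_of_le (fun k => sq_nonneg _) hPsq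
    exact hMsum.mul_left _
  refine ⟨hsummable, ?_⟩
  have hnorm_u : FC.hsNorm s u ^ 2 = U := Real.sq_sqrt hU0
  have hnorm_η : FC.hsNorm (s-1) η ^ 2 = E := Real.sq_sqrt hE0
  rw [hnorm_u, hnorm_η]
  calc ∑' k : ℕ, |FC.pairInner s (s-1) (hMol1 (⇑jhat) ε ξ k u) (hMol2 (⇑jhat) ε ξ k η) u η| ^ 2
      ≤ ∑' k : ℕ, ((K₁+K₂) * (U+E))^2 * SM * M k :=
        Summable.tsum_le_tsum hPsq hsummable (by exact (hMsum.mul_left _))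
    _ = ((K₁+K₂) * (U+E))^2 * SM * SM := by
        rw [show (fun k : ℕ => ((K₁+K₂) * (U+E))^2 * SM * M k) =
          (fun k : ℕ => (((K₁+K₂) * (U+E))^2 * SM) * M k) from rfl, tsum_mul_left, ← hSM]
    _ ≤ ((K₁+K₂)^2 * SM^2 + 1) * (U + E)^2 := by nlinarith [sq_nonneg ((U+E) * SM), sq_nonneg (U+E), hSM0, hU0, hE0]
end
end
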